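/- arXiv:1801.03123 — 6 statements merged into one kernel-verified Lean document; each statement's English description precedes it below -/
import Mathlib

section
/- The operation $*_2$ on finitely supported matrix sequences defined by $(A *_2 B)_j = \sum_{k\in\mathbb{Z}} A_{j-2k} B_k$ satisfies $A *_2 (B *_2 C) = (A *_2 B) *_4 C$, where $(A *_4 C)_j = \sum_{k} A_{j-4k} C_k$. -/
/-- Convolution with modulus `m` of matrix-valued sequences:
`(A *ₘ B)_j = ∑_k A_{j-mk} B_k`. -/
noncomputable def conv (d : ℕ) (m : ℤ) (A B : ℤ → Matrix (Fin (d+1)) (Fin (d+1)) ℝ) :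
    ℤ → Matrix (Fin (d+1)) (Fin (d+1)) ℝ :=
  fun j => ∑ᶠ k : ℤ, A (j - m * k) * B k

private lemma finsum_eq_finsum_mem' {α : Type*} {M : Type*} [AddCommMonoid M] {f : α → M}
    {s : Set α} (h : Function.support f ⊆ s) : ∑ᶠ i, f i = ∑ᶠ i ∈ s, f i := by
  rw [← finsum_mem_univ f, ← finsum_mem_inter_support f Set.univ,
    ← finsum_mem_inter_support f s, Set.univ_inter, Set.inter_eq_right.mpr h]

/-- `A *₂ (B *₂ C) = (A *₂ B) *₄ C`. -/
theorem conv_two_assoc (d : ℕ) (A B C : ℤ → Matrix (Fin (d+1)) (Fin (d+1)) ℝ)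
    (hA : (Function.support A).Finite) (hB : (Function.support B).Finite)
    (hC : (Function.support C).Finite) :
    conv d 2 A (conv d 2 B C) = conv d 4 (conv d 2 A B) C := by
  funext j
  simp only [conv]
  set F : ℤ → ℤ → Matrix (Fin (d+1)) (Fin (d+1)) ℝ :=
    fun k l => A (j - 2 * k) * (B (k - 2 * l) * C l) with hF
  have hs : ((fun k : ℤ => j - 2 * k) ⁻¹' (Function.support A)).Finite :=
    hA.preimage (fun x _ y _ h => by omega)
  set s : Set ℤ := (fun k : ℤ => j - 2 * k) ⁻¹' (Function.support A) with hsdef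
  have hFk : ∀ k, (Function.support fun l => F k l) ⊆ Function.support C := by
    intro k l hl
    simp only [Function.mem_support] at hl ⊢
    intro h; exact hl (by simp [hF, h])
  have hFl : ∀ l, (Function.support fun k => F k l) ⊆ s := by
    intro l k hk
    simp only [Function.mem_support] at hk
    simp only [hsdef, Set.mem_preimage, Function.mem_support]
    intro h; exact hk (by simp [hF, h])
  calc ∑ᶠ k, A (j - 2 * k) * ∑ᶠ l, B (k - 2 * l) * C l
      = ∑ᶠ k, ∑ᶠ l, F k l := by
        refine finsum_congr fun k => ?_
        refine mul_finsum' _ _ (hC.subset ?_)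
        intro l hl
        simp only [Function.mem_support] at hl ⊢
        intro h; exact hl (by simp [h])
    _ = ∑ᶠ l, ∑ᶠ k, F k l := by
        have h1 : (Function.support fun k => ∑ᶠ l, F k l) ⊆ s := by
          intro k hk
          simp only [Function.mem_support] at hk
          by_contra h
          simp only [hsdef, Set.mem_preimage, Function.mem_support, not_not] at h
          exact hk (by simp [hF, h])
        have h2 : (Function.support fun l => ∑ᶠ k, F k l) ⊆ Function.support C := by
          intro l hl
          simp only [Function.mem_support] at hl
          by_contra h
          simp only [Function.mem_support, not_not] at h
          exact hl (by simp [hF, h])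
        rw [finsum_eq_finsum_mem' h1, finsum_eq_finsum_mem' h2,
          finsum_mem_congr rfl (fun k _ => finsum_eq_finsum_mem' (hFk k)),
          finsum_mem_comm F hs hC,
          finsum_mem_congr rfl (fun l _ => (finsum_eq_finsum_mem' (hFl l)).symm)]
    _ = ∑ᶠ l, (∑ᶠ k, A (j - 4 * l - 2 * k) * B k) * C l := by
        refine finsum_congr fun l => ?_
        rw [finsum_mul' _ (C l) (hB.subset ?_)]
        · have h := finsum_comp (g := fun k => F k l) (fun k => k + 2 * l)
            (Equiv.addRight (2 * l)).bijective
          rw [← h]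
          refine finsum_congr fun k => ?_
          have h1 : j - 2 * (k + 2 * l) = j - 4 * l - 2 * k := by ring
          have h2 : k + 2 * l - 2 * l = k := by ring
          simp only [hF, h1, h2, mul_assoc]
        · intro k hk
          simp only [Function.mem_support] at hk ⊢
          intro h; exact hk (by simp [h])
end

section
/- Let $f \in C^d(\mathbb{R})$ and let $T_{p,\Lambda} f(x,h) = [1, h, \dots, h^p, e^{\lambda_1 h}, \dots, e^{\lambda_r h}] \, V_d^{-1} \, [f^{(j)}(x)]_{j=0}^d$ be the generalized Taylor expansion. Then for every $0 < R < 1$ there is a constant $C_{\Lambda,R}$ depending only on $\Lambda = \{\lambda_1,\dots,\lambda_r\}$ and $R$ such that $|T_{p,\Lambda} f(x,h) - T_d f(x,h)| \le C_{\Lambda,R} \, |v_f(x)|_2 \, |h|^{d+1}$ for all $x \in \mathbb{R}$ and $|h| \le R$, where $T_d f(x,h) = \sum_{j=0}^d \frac{f^{(j)}(x)}{j!} h^j$ is the classical Taylor polynomial and $v_f(x) = [f^{(j)}(x)]_{j=0}^d$. -/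
open scoped Matrix

/-- The confluent Vandermonde matrix `V_d` (`d = p + r`): columns `0,…,p` are
`j! e_j`, columns `p+1,…,d` are `[λ_k^i]_{i=0}^d`. -/
noncomputable def Vand (p r : ℕ) (l : Fin r → ℝ) :
    Matrix (Fin (p + r + 1)) (Fin (p + r + 1)) ℝ :=
  Matrix.of fun i c =>
    if hc : (c : ℕ) ≤ p then (if (i : ℕ) = (c : ℕ) then ((c : ℕ).factorial : ℝ) else 0)
    else l ⟨(c : ℕ) - (p + 1), by have := c.isLt; omega⟩ ^ (i : ℕ)

/-- The row vector `[1, h, …, h^p, e^{λ_1 h}, …, e^{λ_r h}]`. -/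
noncomputable def expBasis (p r : ℕ) (l : Fin r → ℝ) (h : ℝ) : Fin (p + r + 1) → ℝ :=
  fun c =>
    if hc : (c : ℕ) ≤ p then h ^ (c : ℕ)
    else Real.exp (l ⟨(c : ℕ) - (p + 1), by have := c.isLt; omega⟩ * h)

/-- The vector of derivatives `v_f(x) = [f^(j)(x)]_{j=0}^d`. -/
noncomputable def vder (d : ℕ) (f : ℝ → ℝ) (x : ℝ) : Fin (d + 1) → ℝ :=
  fun i => iteratedDeriv (i : ℕ) f x

/-- The generalized Taylor expansion
`T_{p,Λ} f (x,h) = [1,…,h^p,e^{λ_1 h},…,e^{λ_r h}] V_d⁻¹ v_f(x)`. -/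
noncomputable def Tgen (p r : ℕ) (l : Fin r → ℝ) (f : ℝ → ℝ) (x h : ℝ) : ℝ :=
  expBasis p r l h ⬝ᵥ ((Vand p r l)⁻¹ *ᵥ vder (p + r) f x)

/-- The classical Taylor polynomial `T_d f (x,h) = ∑_{j=0}^d f^(j)(x) h^j / j!`. -/
noncomputable def Tcl (d : ℕ) (f : ℝ → ℝ) (x h : ℝ) : ℝ :=
  ∑ j ∈ Finset.range (d + 1), iteratedDeriv j f x / (Nat.factorial j : ℝ) * h ^ j

/-- The Euclidean norm on `Fin n → ℝ`. -/
noncomputable def enorm2 (n : ℕ) (v : Fin n → ℝ) : ℝ := Real.sqrt (∑ i, v i ^ 2)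

set_option maxHeartbeats 1000000 in
lemma abs_exp_sub_sum_le (a h : ℝ) (hh : |h| ≤ 1) (d : ℕ) :
    |Real.exp (a * h) - ∑ j ∈ Finset.range (d + 1), (a * h) ^ j / (Nat.factorial j : ℝ)| ≤
      Real.exp |a| * |h| ^ (d + 1) := by
  have hs1 : Summable (fun n : ℕ => (a * h) ^ n / n.factorial) :=
    Real.summable_pow_div_factorial _
  have hs2 : Summable (fun n : ℕ => |a| ^ n / n.factorial) :=
    Real.summable_pow_div_factorial _
  have hexp1 : Real.exp (a * h) = ∑' n : ℕ, (a * h) ^ n / n.factorial := by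
    rw [Real.exp_eq_exp_ℝ, NormedSpace.exp_eq_tsum_div]
  have hexp2 : Real.exp |a| = ∑' n : ℕ, |a| ^ n / n.factorial := by
    rw [Real.exp_eq_exp_ℝ, NormedSpace.exp_eq_tsum_div]
  have ht1 := hs1.sum_add_tsum_nat_add (d + 1)
  have ht2 := hs2.sum_add_tsum_nat_add (d + 1)
  have hs1' : Summable (fun n : ℕ => (a * h) ^ (n + (d + 1)) / (n + (d + 1)).factorial) :=
    (summable_nat_add_iff (d + 1)).2 hs1
  have hs2' : Summable (fun n : ℕ => |a| ^ (n + (d + 1)) / (n + (d + 1)).factorial) :=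
    (summable_nat_add_iff (d + 1)).2 hs2
  have heq : Real.exp (a * h) - ∑ j ∈ Finset.range (d + 1), (a * h) ^ j / (Nat.factorial j : ℝ)
      = ∑' n : ℕ, (a * h) ^ (n + (d + 1)) / (n + (d + 1)).factorial := by
    rw [hexp1, ← ht1]; ring
  rw [heq]
  have key : ∀ n : ℕ, |(a * h) ^ (n + (d + 1)) / ((n + (d + 1)).factorial : ℝ)|
      ≤ |a| ^ (n + (d + 1)) / (n + (d + 1)).factorial * |h| ^ (d + 1) := by
    intro n
    rw [abs_div, abs_pow, abs_mul, mul_pow,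
      abs_of_nonneg (by positivity : (0:ℝ) ≤ (((n + (d + 1)).factorial : ℕ) : ℝ))]
    have hpow : |h| ^ (n + (d + 1)) ≤ |h| ^ (d + 1) :=
      pow_le_pow_of_le_one (abs_nonneg h) hh (by omega)
    calc |a| ^ (n + (d + 1)) * |h| ^ (n + (d + 1)) / ((n + (d + 1)).factorial : ℝ)
        ≤ |a| ^ (n + (d + 1)) * |h| ^ (d + 1) / ((n + (d + 1)).factorial : ℝ) := by gcongr
      _ = |a| ^ (n + (d + 1)) / ((n + (d + 1)).factorial : ℝ) * |h| ^ (d + 1) := by ring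
  have htail2 : (∑' n : ℕ, |a| ^ (n + (d + 1)) / ((n + (d + 1)).factorial : ℝ)) ≤ Real.exp |a| := by
    have hnn : (0:ℝ) ≤ ∑ j ∈ Finset.range (d + 1), |a| ^ j / (Nat.factorial j : ℝ) :=
      Finset.sum_nonneg fun i _ => by positivity
    rw [hexp2, ← ht2]; linarith
  calc |∑' n : ℕ, (a * h) ^ (n + (d + 1)) / ((n + (d + 1)).factorial : ℝ)|
      ≤ ∑' n : ℕ, |(a * h) ^ (n + (d + 1)) / ((n + (d + 1)).factorial : ℝ)| := by
        simpa only [Real.norm_eq_abs] using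
          norm_tsum_le_tsum_norm (f := fun n : ℕ => (a * h) ^ (n + (d + 1)) / ((n + (d + 1)).factorial : ℝ))
            (by simpa only [Real.norm_eq_abs] using hs1'.abs)
    _ ≤ ∑' n : ℕ, |a| ^ (n + (d + 1)) / ((n + (d + 1)).factorial : ℝ) * |h| ^ (d + 1) :=
        Summable.tsum_le_tsum key hs1'.abs (hs2'.mul_right _)
    _ = (∑' n : ℕ, |a| ^ (n + (d + 1)) / ((n + (d + 1)).factorial : ℝ)) * |h| ^ (d + 1) :=
        tsum_mul_right
    _ ≤ Real.exp |a| * |h| ^ (d + 1) := by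
        apply mul_le_mul_of_nonneg_right htail2 (by positivity)

lemma vand_det_ne_zero (p r : ℕ) (hr : 1 ≤ r) (l : Fin r → ℝ)
    (h0 : ∀ k, l k ≠ 0) (hinj : Function.Injective l) :
    (Vand p r l).det ≠ 0 := by
  classical
  intro hdet
  obtain ⟨a, ha0, hav⟩ := (Matrix.exists_vecMul_eq_zero_iff).2 hdet
  have hcol : ∀ c : Fin (p + r + 1), ∑ i, a i * Vand p r l i c = 0 := by
    intro c
    have := congrFun hav c
    simpa [Matrix.vecMul, dotProduct] using this
  -- a vanishes on polynomial columns
  have hA : ∀ c : Fin (p + r + 1), (c : ℕ) ≤ p → a c = 0 := by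
    intro c hc
    have h1 := hcol c
    rw [Finset.sum_eq_single c] at h1
    · simp only [Vand, Matrix.of_apply, dif_pos hc, if_pos rfl] at h1
      have : ((c : ℕ).factorial : ℝ) ≠ 0 := Nat.cast_ne_zero.2 (Nat.factorial_ne_zero _)
      exact (mul_eq_zero.1 h1).resolve_right this
    · intro b _ hb
      have hbc : (b : ℕ) ≠ (c : ℕ) := fun hh => hb (Fin.ext hh)
      simp [Vand, dif_pos hc, if_neg hbc]
    · simp
  -- the coefficient function on ℕ
  set b : ℕ → ℝ := fun j => if hj : j < p + r + 1 then a ⟨j, hj⟩ else 0 with hb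
  have hbA : ∀ j ≤ p, b j = 0 := by
    intro j hj
    have hj' : j < p + r + 1 := by omega
    simp only [hb, dif_pos hj']
    exact hA _ hj
  set Q : Polynomial ℝ := ∑ j ∈ Finset.range r, Polynomial.C (b (p + 1 + j)) * Polynomial.X ^ j
    with hQ
  have hQeval : ∀ k, Q.eval (l k) = 0 := by
    intro k
    have hck : (p + 1 + (k : ℕ)) < p + r + 1 := by have := k.isLt; omega
    set c : Fin (p + r + 1) := ⟨p + 1 + (k : ℕ), hck⟩ with hcdef
    have hcp : ¬ ((c : ℕ) ≤ p) := by simp [hcdef]; omega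
    have h1 := hcol c
    have hkk : (⟨(c : ℕ) - (p + 1), by have := c.isLt; omega⟩ : Fin r) = k := by
      apply Fin.ext; simp [hcdef]
    have h2 : ∑ i : Fin (p + r + 1), a i * (l k) ^ (i : ℕ) = 0 := by
      rw [← h1]
      refine Finset.sum_congr rfl fun i _ => ?_
      simp [Vand, dif_neg hcp, hkk]
    have h3 : ∑ i ∈ Finset.range (p + r + 1), b i * (l k) ^ i = 0 := by
      rw [← Fin.sum_univ_eq_sum_range (fun i => b i * (l k) ^ i)]
      rw [← h2]
      refine Finset.sum_congr rfl fun i _ => ?_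
      simp only [hb, dif_pos i.isLt, Fin.eta]
    have h4 : ∑ i ∈ Finset.range (p + 1), b i * (l k) ^ i
        + ∑ j ∈ Finset.range r, b (p + 1 + j) * (l k) ^ (p + 1 + j) = 0 := by
      have hsr := Finset.sum_range_add (fun i => b i * (l k) ^ i) (p + 1) r
      rw [← hsr, show p + 1 + r = p + r + 1 from by omega]
      exact h3
    have h5 : ∑ i ∈ Finset.range (p + 1), b i * (l k) ^ i = 0 := by
      refine Finset.sum_eq_zero fun i hi => ?_
      rw [hbA i (by simp at hi; omega)]; ring
    have h6 : (l k) ^ (p + 1) * ∑ j ∈ Finset.range r, b (p + 1 + j) * (l k) ^ j = 0 := by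
      rw [Finset.mul_sum]
      rw [h5] at h4
      rw [← h4]
      simp only [zero_add]
      refine Finset.sum_congr rfl fun j _ => ?_
      rw [pow_add]; ring
    have h7 : ∑ j ∈ Finset.range r, b (p + 1 + j) * (l k) ^ j = 0 :=
      (mul_eq_zero.1 h6).resolve_left (pow_ne_zero _ (h0 k))
    rw [hQ]
    simpa [Polynomial.eval_finset_sum] using h7
  have hQdeg : Q.natDegree < r := by
    have : Q.natDegree ≤ r - 1 := by
      refine Polynomial.natDegree_sum_le_of_forall_le _ _ fun j hj => ?_
      calc (Polynomial.C (b (p + 1 + j)) * Polynomial.X ^ j).natDegree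
          ≤ (Polynomial.C (b (p + 1 + j))).natDegree + (Polynomial.X ^ j : Polynomial ℝ).natDegree :=
            Polynomial.natDegree_mul_le
        _ ≤ j := by simp
        _ ≤ r - 1 := by simp at hj; omega
    omega
  have hQ0 : Q = 0 :=
    Polynomial.eq_zero_of_natDegree_lt_card_of_eval_eq_zero Q hinj hQeval
      (by simpa using hQdeg)
  have hbB : ∀ j, j < r → b (p + 1 + j) = 0 := by
    intro j hj
    have := congrArg (Polynomial.coeff · j) hQ0
    simp only [hQ, Polynomial.finset_sum_coeff, Polynomial.coeff_C_mul,
      Polynomial.coeff_X_pow, Polynomial.coeff_zero] at this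
    rwa [Finset.sum_eq_single j (fun b_1 _ hne => by simp [Ne.symm hne]) (by simp [hj]),
      if_pos rfl, mul_one] at this
  apply ha0
  funext i
  simp only [Pi.zero_apply]
  by_cases hip : (i : ℕ) ≤ p
  · exact hA i hip
  · have hj : (i : ℕ) - (p + 1) < r := by have := i.isLt; omega
    have := hbB ((i : ℕ) - (p + 1)) hj
    have hidx : p + 1 + ((i : ℕ) - (p + 1)) = (i : ℕ) := by omega
    rw [hidx] at this
    simpa only [hb, dif_pos i.isLt, Fin.eta] using this

/-- error bound for the generalized Taylor expansion: for any
`0 < R < 1` there is a constant `C` depending only on `Λ` and `R` with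
`|T_{p,Λ} f(x,h) - T_d f(x,h)| ≤ C |v_f(x)|₂ |h|^{d+1}` for `|h| ≤ R`. -/
theorem tgen_sub_taylor_bound (p r : ℕ) (hr : 1 ≤ r) (l : Fin r → ℝ)
    (h0 : ∀ k, l k ≠ 0) (hinj : Function.Injective l)
    (R : ℝ) (hR0 : 0 < R) (hR1 : R < 1) :
    ∃ C > 0, ∀ f : ℝ → ℝ, ContDiff ℝ (p + r : ℕ) f → ∀ x h : ℝ, |h| ≤ R →
      |Tgen p r l f x h - Tcl (p + r) f x h| ≤
        C * enorm2 (p + r + 1) (vder (p + r) f x) * |h| ^ (p + r + 1) := by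
  classical
  have hdet : IsUnit (Vand p r l).det := (vand_det_ne_zero p r hr l h0 hinj).isUnit
  set Vi : Matrix (Fin (p + r + 1)) (Fin (p + r + 1)) ℝ := (Vand p r l)⁻¹ with hVi
  set K : Fin (p + r + 1) → ℝ := fun c =>
    if hc : (c : ℕ) ≤ p then 0
    else Real.exp |l ⟨(c : ℕ) - (p + 1), by have := c.isLt; omega⟩| with hK
  have hKnn : ∀ c, 0 ≤ K c := by
    intro c; rw [hK]; dsimp only; split
    · exact le_refl 0
    · exact (Real.exp_pos _).le
  set S : ℝ := ∑ c : Fin (p + r + 1), K c * ∑ j : Fin (p + r + 1), |Vi c j| with hS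
  have hSnn : 0 ≤ S :=
    Finset.sum_nonneg fun c _ =>
      mul_nonneg (hKnn c) (Finset.sum_nonneg fun j _ => abs_nonneg _)
  refine ⟨1 + S, by linarith, ?_⟩
  intro f hf x h hhR
  have hh1 : |h| ≤ 1 := hhR.trans hR1.le
  set N : ℝ := enorm2 (p + r + 1) (vder (p + r) f x) with hN
  have hNnn : 0 ≤ N := Real.sqrt_nonneg _
  set w : Fin (p + r + 1) → ℝ := Vi *ᵥ vder (p + r) f x with hw
  have hVw : Vand p r l *ᵥ w = vder (p + r) f x := by
    rw [hw, hVi, Matrix.mulVec_mulVec, Matrix.mul_nonsing_inv _ hdet, Matrix.one_mulVec]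
  set B : Fin (p + r + 1) → ℝ := fun c =>
    ∑ j : Fin (p + r + 1), Vand p r l j c * h ^ (j : ℕ) / (Nat.factorial (j : ℕ) : ℝ) with hB
  -- v_j ≤ N
  have hvN : ∀ j : Fin (p + r + 1), |vder (p + r) f x j| ≤ N := by
    intro j
    rw [hN, enorm2, ← Real.sqrt_sq_eq_abs]
    exact Real.sqrt_le_sqrt (Finset.single_le_sum
      (f := fun i => vder (p + r) f x i ^ 2) (fun i _ => sq_nonneg _) (Finset.mem_univ j))
  -- |w c| bound
  have hwc : ∀ c, |w c| ≤ (∑ j : Fin (p + r + 1), |Vi c j|) * N := by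
    intro c
    have hwcc : w c = ∑ j, Vi c j * vder (p + r) f x j := by
      rw [hw]; simp [Matrix.mulVec, dotProduct]
    rw [hwcc]
    calc |∑ j, Vi c j * vder (p + r) f x j| ≤ ∑ j, |Vi c j * vder (p + r) f x j| :=
          Finset.abs_sum_le_sum_abs _ _
      _ ≤ ∑ j, |Vi c j| * N := Finset.sum_le_sum fun j _ => by
          rw [abs_mul]; exact mul_le_mul_of_nonneg_left (hvN j) (abs_nonneg _)
      _ = (∑ j : Fin (p + r + 1), |Vi c j|) * N := (Finset.sum_mul _ _ _).symm
  -- Tcl rewritten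
  have hvj : ∀ j : Fin (p + r + 1), vder (p + r) f x j = ∑ c, Vand p r l j c * w c := by
    intro j; rw [← hVw]; simp [Matrix.mulVec, dotProduct]
  have hTcl : Tcl (p + r) f x h = ∑ c, w c * B c := by
    calc Tcl (p + r) f x h
        = ∑ j : Fin (p + r + 1), vder (p + r) f x j / (Nat.factorial (j : ℕ) : ℝ) ^ 1 * h ^ (j : ℕ) := by
          rw [Tcl, ← Fin.sum_univ_eq_sum_range
            (fun j => iteratedDeriv j f x / (Nat.factorial j : ℝ) * h ^ j)]
          simp [vder]
      _ = ∑ j : Fin (p + r + 1), ∑ c, w c * (Vand p r l j c * h ^ (j : ℕ) / (Nat.factorial (j : ℕ) : ℝ)) := by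
          refine Finset.sum_congr rfl fun j _ => ?_
          rw [hvj j, Finset.sum_div, Finset.sum_mul]
          refine Finset.sum_congr rfl fun c _ => ?_
          ring
      _ = ∑ c, ∑ j : Fin (p + r + 1), w c * (Vand p r l j c * h ^ (j : ℕ) / (Nat.factorial (j : ℕ) : ℝ)) :=
          Finset.sum_comm
      _ = ∑ c, w c * B c := by
          refine Finset.sum_congr rfl fun c _ => ?_
          rw [hB, ← Finset.mul_sum]
  -- difference
  have hsplit : Tgen p r l f x h - Tcl (p + r) f x h
      = ∑ c, w c * (expBasis p r l h c - B c) := by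
    have hTg : Tgen p r l f x h = ∑ c, expBasis p r l h c * w c := by
      rw [Tgen]; simp [dotProduct, hw, hVi]
    rw [hTg, hTcl, ← Finset.sum_sub_distrib]
    exact Finset.sum_congr rfl fun c _ => by ring
  -- B on polynomial columns
  have hBpoly : ∀ c : Fin (p + r + 1), (c : ℕ) ≤ p → B c = h ^ (c : ℕ) := by
    intro c hc
    rw [hB]; dsimp only
    rw [Finset.sum_eq_single c]
    · simp [Vand, dif_pos hc]
      rw [mul_comm, mul_div_assoc, div_self (Nat.cast_ne_zero.2 (Nat.factorial_ne_zero _)), mul_one]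
    · intro b _ hb
      have hbc : (b : ℕ) ≠ (c : ℕ) := fun hh => hb (Fin.ext hh)
      simp [Vand, dif_pos hc, if_neg hbc]
    · simp
  -- B on exponential columns
  have hBexp : ∀ c : Fin (p + r + 1), ¬ (c : ℕ) ≤ p →
      B c = ∑ j ∈ Finset.range (p + r + 1),
        (l ⟨(c : ℕ) - (p + 1), by have := c.isLt; omega⟩ * h) ^ j / (Nat.factorial j : ℝ) := by
    intro c hc
    rw [hB]; dsimp only
    rw [← Fin.sum_univ_eq_sum_range
      (fun j => (l ⟨(c : ℕ) - (p + 1), by have := c.isLt; omega⟩ * h) ^ j / (Nat.factorial j : ℝ))]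
    refine Finset.sum_congr rfl fun j _ => ?_
    simp only [Vand, Matrix.of_apply, dif_neg hc, mul_pow]
  -- termwise bound
  have hterm : ∀ c ∈ (Finset.univ : Finset (Fin (p + r + 1))),
      |w c * (expBasis p r l h c - B c)|
        ≤ (K c * ∑ j : Fin (p + r + 1), |Vi c j|) * (N * |h| ^ (p + r + 1)) := by
    intro c _
    rw [abs_mul]
    by_cases hc : (c : ℕ) ≤ p
    · have he : expBasis p r l h c = h ^ (c : ℕ) := by rw [expBasis, dif_pos hc]
      rw [he, hBpoly c hc, sub_self, abs_zero, mul_zero]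
      exact mul_nonneg (mul_nonneg (hKnn c) (Finset.sum_nonneg fun j _ => abs_nonneg _))
        (mul_nonneg hNnn (pow_nonneg (abs_nonneg _) _))
    · have he : expBasis p r l h c
          = Real.exp (l ⟨(c : ℕ) - (p + 1), by have := c.isLt; omega⟩ * h) := by
        rw [expBasis, dif_neg hc]
      have hEB : |expBasis p r l h c - B c| ≤ K c * |h| ^ (p + r + 1) := by
        rw [he, hBexp c hc, hK]
        simpa only [dif_neg hc] using
          abs_exp_sub_sum_le (l ⟨(c : ℕ) - (p + 1), by have := c.isLt; omega⟩) h hh1 (p + r)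
      calc |w c| * |expBasis p r l h c - B c|
          ≤ ((∑ j : Fin (p + r + 1), |Vi c j|) * N) * (K c * |h| ^ (p + r + 1)) :=
            mul_le_mul (hwc c) hEB (abs_nonneg _)
              (mul_nonneg (Finset.sum_nonneg fun j _ => abs_nonneg _) hNnn)
        _ = (K c * ∑ j : Fin (p + r + 1), |Vi c j|) * (N * |h| ^ (p + r + 1)) := by ring
  -- assemble
  calc |Tgen p r l f x h - Tcl (p + r) f x h|
      = |∑ c, w c * (expBasis p r l h c - B c)| := by rw [hsplit]
    _ ≤ ∑ c, |w c * (expBasis p r l h c - B c)| := Finset.abs_sum_le_sum_abs _ _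
    _ ≤ ∑ c, (K c * ∑ j : Fin (p + r + 1), |Vi c j|) * (N * |h| ^ (p + r + 1)) :=
        Finset.sum_le_sum hterm
    _ = S * (N * |h| ^ (p + r + 1)) := by rw [hS, Finset.sum_mul]
    _ ≤ (1 + S) * (N * |h| ^ (p + r + 1)) := by
        have : (0:ℝ) ≤ N * |h| ^ (p + r + 1) :=
          mul_nonneg hNnn (pow_nonneg (abs_nonneg _) _)
        nlinarith
    _ = (1 + S) * N * |h| ^ (p + r + 1) := by ring
end

section
/- The columns of the confluent Vandermonde matrix $V_d$ satisfy the expansion identity: the vector of functions $[1, x, \dots, x^p, e^{\lambda_1 x}, \dots, e^{\lambda_r x}]^T$ equals $\sum_{k=0}^{\infty} V_d^T\,(M_\Lambda^T)^k\, [x^{k(d+1)+j}/(k(d+1)+j)!]_{j=0}^d$ viewed entrywise, i.e., $[x^j]_{j=0}^p$ stacked over $[e^{\lambda_j x}]_{j=1}^r$ equals $[V_d^T \mid M_\Lambda V_d^T \mid M_\Lambda^2 V_d^T \mid \cdots]\,[x^j/j!]_{j\in\mathbb{N}}$. -/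
open scoped Matrix

/-- The diagonal matrix `M_Λ = diag(0,…,0,λ_1^{d+1},…,λ_r^{d+1})`. -/
noncomputable def Mdiag (p r : ℕ) (l : Fin r → ℝ) :
    Matrix (Fin (p + r + 1)) (Fin (p + r + 1)) ℝ :=
  Matrix.diagonal fun c =>
    if hc : (c : ℕ) ≤ p then 0
    else l ⟨(c : ℕ) - (p + 1), by have := c.isLt; omega⟩ ^ (p + r + 1)

lemma exp_block (n : ℕ) (hn : 0 < n) (y : ℝ) :
    HasSum (fun k : ℕ => ∑ j : Fin n, y ^ (k * n + (j : ℕ)) /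
      (Nat.factorial (k * n + (j : ℕ)) : ℝ)) (Real.exp y) := by
  have : NeZero n := ⟨hn.ne'⟩
  have hs : HasSum (fun m : ℕ => y ^ m / (m.factorial : ℝ)) (Real.exp y) := by
    rw [Real.exp_eq_exp_ℝ]
    exact NormedSpace.expSeries_div_hasSum_exp y
  have he : HasSum (fun q : ℕ × Fin n => y ^ (q.1 * n + (q.2 : ℕ)) /
      (Nat.factorial (q.1 * n + (q.2 : ℕ)) : ℝ)) (Real.exp y) := by
    have := ((Nat.divModEquiv n).symm.hasSum_iff (f := fun m : ℕ => y ^ m / (m.factorial : ℝ))).2 hs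
    simpa [Nat.divModEquiv, Function.comp_def] using this
  exact he.prod_fiberwise fun k => hasSum_fintype _

/-- the expansion identity
`[x^j]_{j≤p} ⊕ [e^{λ_k x}] = ∑_{k=0}^∞ (M_Λ^k V_dᵀ) [x^{k(d+1)+j}/(k(d+1)+j)!]_j`. -/
theorem expBasis_expansion (p r : ℕ) (hr : 1 ≤ r) (l : Fin r → ℝ)
    (h0 : ∀ k, l k ≠ 0) (hinj : Function.Injective l) (x : ℝ) :
    expBasis p r l x =
      ∑' k : ℕ, ((Mdiag p r l) ^ k * (Vand p r l)ᵀ) *ᵥ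
        (fun j : Fin (p + r + 1) =>
          x ^ (k * (p + r + 1) + (j : ℕ)) /
            (Nat.factorial (k * (p + r + 1) + (j : ℕ)) : ℝ)) := by
  have H : HasSum (fun k : ℕ => ((Mdiag p r l) ^ k * (Vand p r l)ᵀ) *ᵥ
        (fun j : Fin (p + r + 1) =>
          x ^ (k * (p + r + 1) + (j : ℕ)) /
            (Nat.factorial (k * (p + r + 1) + (j : ℕ)) : ℝ))) (expBasis p r l x) := by
    rw [Pi.hasSum]
    intro c
    have hdiag : ∀ k : ℕ, (Mdiag p r l) ^ k =
        Matrix.diagonal fun c : Fin (p + r + 1) =>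
          (if hc : (c : ℕ) ≤ p then (0:ℝ)
           else l ⟨(c : ℕ) - (p + 1), by have := c.isLt; omega⟩ ^ (p + r + 1)) ^ k := by
      intro k
      rw [Mdiag, Matrix.diagonal_pow]
      rfl
    have hFk : ∀ k : ℕ, (((Mdiag p r l) ^ k * (Vand p r l)ᵀ) *ᵥ
        (fun j : Fin (p + r + 1) =>
          x ^ (k * (p + r + 1) + (j : ℕ)) /
            (Nat.factorial (k * (p + r + 1) + (j : ℕ)) : ℝ))) c =
        (if hc : (c : ℕ) ≤ p then (0:ℝ)
           else l ⟨(c : ℕ) - (p + 1), by have := c.isLt; omega⟩ ^ (p + r + 1)) ^ k *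
        ∑ i : Fin (p + r + 1), Vand p r l i c *
          (x ^ (k * (p + r + 1) + (i : ℕ)) /
            (Nat.factorial (k * (p + r + 1) + (i : ℕ)) : ℝ)) := by
      intro k
      rw [← Matrix.mulVec_mulVec, hdiag, Matrix.mulVec_diagonal]
      simp [Matrix.mulVec, dotProduct, Matrix.transpose_apply]
    simp only [hFk]
    by_cases hc : (c : ℕ) ≤ p
    · have hval : ∀ k : ℕ,
          (if hc : (c : ℕ) ≤ p then (0:ℝ)
           else l ⟨(c : ℕ) - (p + 1), by have := c.isLt; omega⟩ ^ (p + r + 1)) ^ k *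
          ∑ i : Fin (p + r + 1), Vand p r l i c *
            (x ^ (k * (p + r + 1) + (i : ℕ)) /
              (Nat.factorial (k * (p + r + 1) + (i : ℕ)) : ℝ)) =
          (if k = 0 then x ^ (c : ℕ) else 0) := by
        intro k
        rw [dif_pos hc]
        rcases Nat.eq_zero_or_pos k with hk | hk
        · subst hk
          rw [if_pos rfl, pow_zero, one_mul]
          rw [Finset.sum_eq_single c]
          · simp only [Vand, Matrix.of_apply, dif_pos hc, if_pos rfl, zero_mul, zero_add, ↓reduceIte]
            have hf : (((c : ℕ).factorial : ℝ)) ≠ 0 := Nat.cast_ne_zero.2 (Nat.factorial_ne_zero _)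
            field_simp
          · intro i _ hi
            have : (i : ℕ) ≠ (c : ℕ) := fun h => hi (Fin.val_injective h)
            simp [Vand, hc, this]
          · simp
        · rw [if_neg hk.ne', zero_pow hk.ne', zero_mul]
      simp only [hval]
      have : expBasis p r l x c = x ^ (c : ℕ) := by
        simp only [expBasis]; rw [dif_pos hc]
      rw [this]
      exact hasSum_ite_eq 0 _
    · have hval : ∀ k : ℕ,
          (if hc : (c : ℕ) ≤ p then (0:ℝ)
           else l ⟨(c : ℕ) - (p + 1), by have := c.isLt; omega⟩ ^ (p + r + 1)) ^ k *
          ∑ i : Fin (p + r + 1), Vand p r l i c *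
            (x ^ (k * (p + r + 1) + (i : ℕ)) /
              (Nat.factorial (k * (p + r + 1) + (i : ℕ)) : ℝ)) =
          ∑ i : Fin (p + r + 1),
            (l ⟨(c : ℕ) - (p + 1), by have := c.isLt; omega⟩ * x) ^ (k * (p + r + 1) + (i : ℕ)) /
              (Nat.factorial (k * (p + r + 1) + (i : ℕ)) : ℝ) := by
        intro k
        rw [dif_neg hc, Finset.mul_sum]
        refine Finset.sum_congr rfl fun i _ => ?_
        simp only [Vand, Matrix.of_apply, dif_neg hc]
        rw [mul_pow]
        ring
      simp only [hval]
      have : expBasis p r l x c =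
          Real.exp (l ⟨(c : ℕ) - (p + 1), by have := c.isLt; omega⟩ * x) := by
        simp only [expBasis]; rw [dif_neg hc]
      rw [this]
      exact exp_block (p + r + 1) (by omega) _
  exact H.tsum_eq.symm
end

section
/- For $f \in C^d(\mathbb{R})$, any $0 < R < 1$, and each $j = 0,\dots,d$, there is a constant $C_{\Lambda,R}$ such that $|\partial_h^j T_{p,\Lambda} f(x,h) - T_{d-j} f^{(j)}(x,h)| \le C_{\Lambda,R}\,|v_{f^{(k_j)}}(x)|_2\,|h|^{d+1-j}$ for $|h| \le R$, where $k_j = \min\{j, p+1\}$, $T_{d-j} f^{(j)}$ is the classical Taylor polynomial of $f^{(j)}$ of degree $d-j$, and $v_g(x) = [g^{(i)}(x)]_i$ collects derivatives of $g$ up to order $d - k_j$ past the base. -/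
open scoped Matrix

/-! ### Auxiliary material -/

lemma sum_range_split {M : Type*} [AddCommMonoid M] (a b : ℕ) (f : ℕ → M) :
    ∑ n ∈ Finset.range (a + b), f n
      = (∑ n ∈ Finset.range a, f n) + ∑ m ∈ Finset.range b, f (a + m) := by
  induction b with
  | zero => simp
  | succ b ih =>
      rw [show a + (b + 1) = (a + b) + 1 from rfl, Finset.sum_range_succ, ih,
        Finset.sum_range_succ, add_assoc]

lemma iteratedDeriv_comp_nat (j : ℕ) (f : ℝ → ℝ) :
    ∀ m : ℕ, iteratedDeriv m (iteratedDeriv j f) = iteratedDeriv (j + m) f := by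
  intro m
  induction m with
  | zero => simp
  | succ m ih => rw [iteratedDeriv_succ, ih, ← iteratedDeriv_succ, Nat.add_assoc]

lemma exp_taylor_remainder (B : ℝ) :
    ∀ (N : ℕ) (t : ℝ), |t| ≤ B →
      |Real.exp t - ∑ m ∈ Finset.range N, t ^ m / (m.factorial : ℝ)|
        ≤ Real.exp B * |t| ^ N := by
  intro N
  induction N with
  | zero =>
      intro t ht
      simp only [Finset.range_zero, Finset.sum_empty, sub_zero, pow_zero, mul_one]
      rw [abs_of_pos (Real.exp_pos t)]
      exact Real.exp_le_exp.2 ((le_abs_self t).trans ht)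
  | succ N ih =>
      intro t ht
      set g : ℝ → ℝ := fun s => Real.exp s - ∑ m ∈ Finset.range (N + 1), s ^ m / (m.factorial : ℝ)
        with hg
      have hg0 : g 0 = 0 := by
        simp only [hg, Real.exp_zero, Finset.sum_range_succ']
        simp
      have hderiv : ∀ s : ℝ, HasDerivAt g
          (Real.exp s - ∑ m ∈ Finset.range N, s ^ m / (m.factorial : ℝ)) s := by
        intro s
        have h1 : HasDerivAt (fun s : ℝ => ∑ m ∈ Finset.range (N + 1),
            s ^ m / (m.factorial : ℝ)) (∑ m ∈ Finset.range N, s ^ m / (m.factorial : ℝ)) s := by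
          have h2 : HasDerivAt (fun s : ℝ => ∑ m ∈ Finset.range (N + 1),
              s ^ m / (m.factorial : ℝ))
              (∑ m ∈ Finset.range (N + 1), (m : ℝ) * s ^ (m - 1) / (m.factorial : ℝ)) s := by
            apply HasDerivAt.fun_sum
            intro m _
            simpa [div_eq_mul_inv] using (hasDerivAt_pow m s).mul_const ((m.factorial : ℝ)⁻¹)
          convert h2 using 1
          rw [Finset.sum_range_succ']
          simp only [Nat.cast_zero, zero_mul, Nat.factorial_zero, Nat.cast_one, zero_div, add_zero]
          apply Finset.sum_congr rfl
          intro m _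
          have : ((m + 1).factorial : ℝ) = (m + 1) * m.factorial := by
            push_cast [Nat.factorial_succ]; ring
          rw [this]
          have hm1 : ((m : ℝ) + 1) ≠ 0 := by positivity
          field_simp
          rw [Nat.add_sub_cancel]; push_cast; ring
        exact (Real.hasDerivAt_exp s).sub h1
      have key : ‖g t - g 0‖ ≤ (Real.exp B * |t| ^ N) * ‖t - (0 : ℝ)‖ := by
        apply Convex.norm_image_sub_le_of_norm_hasDerivWithin_le
          (f' := fun s => Real.exp s - ∑ m ∈ Finset.range N, s ^ m / (m.factorial : ℝ))
          (fun s hs => (hderiv s).hasDerivWithinAt) ?_ (convex_Icc (-|t|) |t|) ?_ ?_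
        · intro s hs
          simp only [Set.mem_Icc] at hs
          have hsB : |s| ≤ B := le_trans (abs_le.2 ⟨hs.1, hs.2⟩) ht
          calc ‖Real.exp s - ∑ m ∈ Finset.range N, s ^ m / (m.factorial : ℝ)‖
              ≤ Real.exp B * |s| ^ N := ih s hsB
            _ ≤ Real.exp B * |t| ^ N := by
                have h3 : |s| ≤ |t| := abs_le.2 ⟨hs.1, hs.2⟩
                have h4 := pow_le_pow_left₀ (abs_nonneg s) h3 N
                nlinarith [Real.exp_pos B]
        · exact Set.mem_Icc.2 ⟨neg_nonpos.2 (abs_nonneg t), abs_nonneg t⟩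
        · exact Set.mem_Icc.2 ⟨neg_abs_le t, le_abs_self t⟩
      rw [hg0, sub_zero] at key
      calc |g t| ≤ (Real.exp B * |t| ^ N) * |t| := by simpa using key
        _ = Real.exp B * |t| ^ (N + 1) := by rw [pow_succ]; ring

/-- `j`-th derivative of the basis functions. -/
noncomputable def basisD (p r : ℕ) (l : Fin r → ℝ) (j : ℕ) (c : Fin (p + r + 1)) (t : ℝ) : ℝ :=
  if hc : (c : ℕ) ≤ p then (((c : ℕ).descFactorial j : ℕ) : ℝ) * t ^ ((c : ℕ) - j)
  else l ⟨(c : ℕ) - (p + 1), by have := c.isLt; omega⟩ ^ j *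
    Real.exp (l ⟨(c : ℕ) - (p + 1), by have := c.isLt; omega⟩ * t)

/-- `ℕ`-indexed version of the rows of the Vandermonde matrix. -/
noncomputable def VandN (p r : ℕ) (l : Fin r → ℝ) (n : ℕ) (c : Fin (p + r + 1)) : ℝ :=
  if hc : (c : ℕ) ≤ p then (if n = (c : ℕ) then ((c : ℕ).factorial : ℝ) else 0)
  else l ⟨(c : ℕ) - (p + 1), by have := c.isLt; omega⟩ ^ n

lemma vandN_eq (p r : ℕ) (l : Fin r → ℝ) (i c : Fin (p + r + 1)) :
    Vand p r l i c = VandN p r l (i : ℕ) c := rfl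

lemma basisD_zero (p r : ℕ) (l : Fin r → ℝ) (c : Fin (p + r + 1)) (t : ℝ) :
    basisD p r l 0 c t = expBasis p r l t c := by
  by_cases hc : (c : ℕ) ≤ p
  · simp [basisD, expBasis, hc]
  · simp [basisD, expBasis, hc]

lemma basisD_hasDerivAt (p r : ℕ) (l : Fin r → ℝ) (j : ℕ) (c : Fin (p + r + 1)) (t : ℝ) :
    HasDerivAt (fun s => basisD p r l j c s) (basisD p r l (j + 1) c t) t := by
  by_cases hc : (c : ℕ) ≤ p
  · simp only [basisD, dif_pos hc]
    have h1 := (hasDerivAt_pow ((c : ℕ) - j) t).const_mul (((c : ℕ).descFactorial j : ℕ) : ℝ)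
    refine h1.congr_deriv ?_
    rw [Nat.descFactorial_succ]
    have : (c : ℕ) - (j + 1) = (c : ℕ) - j - 1 := by omega
    rw [this]
    push_cast
    ring
  · simp only [basisD, dif_neg hc]
    set lk := l ⟨(c : ℕ) - (p + 1), by have := c.isLt; omega⟩ with hlk
    have h1 : HasDerivAt (fun s : ℝ => lk * s) (lk * 1) t := (hasDerivAt_id t).const_mul lk
    have h2 : HasDerivAt (fun s : ℝ => Real.exp (lk * s)) (Real.exp (lk * t) * (lk * 1)) t :=
      (Real.hasDerivAt_exp (lk * t)).comp t h1
    have h3 := h2.const_mul (lk ^ j)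
    refine h3.congr_deriv ?_
    rw [pow_succ]
    ring

lemma iteratedDeriv_tgen (p r : ℕ) (l : Fin r → ℝ) (f : ℝ → ℝ) (x : ℝ) (j : ℕ) :
    iteratedDeriv j (fun t => Tgen p r l f x t)
      = fun t => ∑ c, ((Vand p r l)⁻¹ *ᵥ vder (p + r) f x) c * basisD p r l j c t := by
  induction j with
  | zero =>
      funext t
      rw [iteratedDeriv_zero]
      simp only [Tgen, dotProduct, basisD_zero]
      exact Finset.sum_congr rfl fun c _ => mul_comm _ _
  | succ j ih =>
      rw [iteratedDeriv_succ, ih]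
      funext t
      exact (HasDerivAt.fun_sum fun c _ =>
        (basisD_hasDerivAt p r l j c t).const_mul _).deriv

lemma vand_inv_lower (p r : ℕ) (l : Fin r → ℝ) (hdet : IsUnit (Vand p r l).det)
    (c i : Fin (p + r + 1)) (hc : p < (c : ℕ)) (hi : (i : ℕ) ≤ p) :
    (Vand p r l)⁻¹ c i = 0 := by
  set u : Fin (p + r + 1) → ℝ := fun m => if m = i then 1 else 0 with hu
  set s : Fin (p + r + 1) → ℝ := fun c' => if c' = i then (((i : ℕ).factorial : ℝ))⁻¹ else 0
    with hs
  have hVs : Vand p r l *ᵥ s = u := by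
    funext m
    simp only [Matrix.mulVec, dotProduct, hs, mul_ite, mul_zero, mul_one]
    rw [Finset.sum_ite_eq' Finset.univ i (fun c' => Vand p r l m c' * ((i : ℕ).factorial : ℝ)⁻¹),
      if_pos (Finset.mem_univ i)]
    simp only [Vand, Matrix.of_apply, dif_pos hi, hu]
    by_cases hmi : m = i
    · rw [if_pos hmi, if_pos (by rw [hmi])]
      rw [mul_inv_cancel₀ (Nat.cast_ne_zero.2 (Nat.factorial_ne_zero _))]
    · rw [if_neg hmi, if_neg (fun h => hmi (Fin.ext h)), zero_mul]
  have hinvu : (Vand p r l)⁻¹ *ᵥ u = s := by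
    rw [← hVs, Matrix.mulVec_mulVec, Matrix.nonsing_inv_mul _ hdet, Matrix.one_mulVec]
  have h1 : ((Vand p r l)⁻¹ *ᵥ u) c = (Vand p r l)⁻¹ c i := by
    simp only [Matrix.mulVec, dotProduct, hu, mul_ite, mul_one, mul_zero]
    rw [Finset.sum_ite_eq' Finset.univ i (fun m => (Vand p r l)⁻¹ c m),
      if_pos (Finset.mem_univ i)]
  rw [hinvu, hs] at h1
  rw [← h1]
  simp only []
  rw [if_neg (fun h : c = i => by rw [h] at hc; omega)]

/-- The per-column constant used for the final bound. -/
noncomputable def dcBound (p r : ℕ) (l : Fin r → ℝ) (R : ℝ) (c : Fin (p + r + 1)) : ℝ :=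
  if hc : (c : ℕ) ≤ p then 0
  else Real.sqrt (∑ i, ((Vand p r l)⁻¹ c i) ^ 2) *
    (|l ⟨(c : ℕ) - (p + 1), by have := c.isLt; omega⟩| ^ (p + r + 1) *
      Real.exp (|l ⟨(c : ℕ) - (p + 1), by have := c.isLt; omega⟩| * R))

lemma dcBound_nonneg (p r : ℕ) (l : Fin r → ℝ) (R : ℝ) (c : Fin (p + r + 1)) :
    0 ≤ dcBound p r l R c := by
  by_cases hc : (c : ℕ) ≤ p
  · simp [dcBound, hc]
  · simp only [dcBound, dif_neg hc]
    positivity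

/-- for `j = 0,…,d`, with `k_j = min{j, p+1}`,
`|∂_h^j T_{p,Λ} f(x,h) - T_{d-j} f^(j)(x,h)| ≤ C |v_{f^{(k_j)}}(x)|₂ |h|^{d+1-j}`
for `|h| ≤ R`, where `C` depends only on `Λ` and `R`. -/
theorem tgen_deriv_sub_taylor_bound (p r : ℕ) (hr : 1 ≤ r) (l : Fin r → ℝ)
    (h0 : ∀ k, l k ≠ 0) (hinj : Function.Injective l)
    (R : ℝ) (hR0 : 0 < R) (hR1 : R < 1) :
    ∃ C > 0, ∀ f : ℝ → ℝ, ContDiff ℝ (p + r : ℕ) f →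
      ∀ j : ℕ, j ≤ p + r → ∀ x h : ℝ, |h| ≤ R →
        |iteratedDeriv j (fun t => Tgen p r l f x t) h -
            Tcl (p + r - j) (iteratedDeriv j f) x h| ≤
          C * enorm2 (p + r - min j (p + 1) + 1)
              (fun i => iteratedDeriv (min j (p + 1) + (i : ℕ)) f x) *
            |h| ^ (p + r + 1 - j) := by
  classical
  have hdet : IsUnit (Vand p r l).det :=
    isUnit_iff_ne_zero.2 (vand_det_ne_zero p r hr l h0 hinj)
  set C0 : ℝ := ∑ c, dcBound p r l R c with hC0
  have hC0nn : 0 ≤ C0 := Finset.sum_nonneg fun c _ => dcBound_nonneg p r l R c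
  refine ⟨C0 + 1, by linarith, ?_⟩
  intro f _hf j hj x h hh
  set coef : Fin (p + r + 1) → ℝ := (Vand p r l)⁻¹ *ᵥ vder (p + r) f x with hcoef
  set W : ℝ := enorm2 (p + r - min j (p + 1) + 1)
      (fun i => iteratedDeriv (min j (p + 1) + (i : ℕ)) f x) with hW
  have hWnn : 0 ≤ W := Real.sqrt_nonneg _
  set kj : ℕ := min j (p + 1) with hkj
  have hkjle : kj ≤ p + 1 := min_le_right _ _
  -- the reproduction property : `V *ᵥ coef = v_f`
  have hVv : Vand p r l *ᵥ coef = vder (p + r) f x := by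
    rw [hcoef, Matrix.mulVec_mulVec, Matrix.mul_nonsing_inv _ hdet, Matrix.one_mulVec]
  have hder : ∀ n, n ≤ p + r → iteratedDeriv n f x = ∑ c, VandN p r l n c * coef c := by
    intro n hn
    have h1 := congrFun hVv ⟨n, by omega⟩
    simp only [Matrix.mulVec, dotProduct, vder] at h1
    rw [← h1]
    rfl
  -- rewrite the Taylor polynomial
  have hTcl : Tcl (p + r - j) (iteratedDeriv j f) x h
      = ∑ c, coef c * (∑ m ∈ Finset.range (p + r - j + 1),
          VandN p r l (j + m) c * (h ^ m / (m.factorial : ℝ))) := by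
    have step1 : ∀ m ∈ Finset.range (p + r - j + 1),
        iteratedDeriv m (iteratedDeriv j f) x / (m.factorial : ℝ) * h ^ m
          = ∑ c, coef c * (VandN p r l (j + m) c * (h ^ m / (m.factorial : ℝ))) := by
      intro m hm
      rw [iteratedDeriv_comp_nat, hder (j + m) (by have := Finset.mem_range.1 hm; omega)]
      rw [Finset.sum_div, Finset.sum_mul]
      exact Finset.sum_congr rfl fun c _ => by ring
    rw [Tcl, Finset.sum_congr rfl step1, Finset.sum_comm]
    exact Finset.sum_congr rfl fun c _ => (Finset.mul_sum _ _ _).symm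
  -- the difference
  rw [iteratedDeriv_tgen, hTcl]
  simp only []
  rw [← hcoef, ← Finset.sum_sub_distrib]
  have hsplit : ∀ c : Fin (p + r + 1),
      coef c * basisD p r l j c h - coef c * (∑ m ∈ Finset.range (p + r - j + 1),
          VandN p r l (j + m) c * (h ^ m / (m.factorial : ℝ)))
      = coef c * (basisD p r l j c h - ∑ m ∈ Finset.range (p + r - j + 1),
          VandN p r l (j + m) c * (h ^ m / (m.factorial : ℝ))) := fun c => by ring
  rw [Finset.sum_congr rfl fun c _ => hsplit c]
  -- per-column evaluation, polynomial columns vanish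
  have hcpoly : ∀ c : Fin (p + r + 1), (c : ℕ) ≤ p →
      basisD p r l j c h - ∑ m ∈ Finset.range (p + r - j + 1),
          VandN p r l (j + m) c * (h ^ m / (m.factorial : ℝ)) = 0 := by
    intro c hc
    simp only [basisD, VandN, dif_pos hc]
    rcases le_or_gt j (c : ℕ) with hjc | hjc
    · rw [sub_eq_zero]
      rw [Finset.sum_eq_single ((c : ℕ) - j)
        (fun m _ hm => by rw [if_neg (fun hh : j + m = (c : ℕ) => hm (by omega)), zero_mul])
        (fun hnm => absurd (Finset.mem_range.2 (by omega)) hnm)]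
      rw [if_pos (by omega)]
      have hfact : (((c : ℕ) - j).factorial) * ((c : ℕ).descFactorial j) = (c : ℕ).factorial :=
        Nat.factorial_mul_descFactorial hjc
      have hne : ((((c : ℕ) - j).factorial : ℕ) : ℝ) ≠ 0 :=
        Nat.cast_ne_zero.2 (Nat.factorial_ne_zero _)
      rw [← hfact]
      push_cast
      field_simp
    · have hd0 : (c : ℕ).descFactorial j = 0 := Nat.descFactorial_eq_zero_iff_lt.2 hjc
      rw [hd0]
      rw [Finset.sum_eq_zero (fun m _ => by
        rw [if_neg (fun hh : j + m = (c : ℕ) => by omega), zero_mul])]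
      simp
  -- exponential columns give the exponential remainder
  have hcexp : ∀ c : Fin (p + r + 1), ¬ ((c : ℕ) ≤ p) →
      basisD p r l j c h - ∑ m ∈ Finset.range (p + r - j + 1),
          VandN p r l (j + m) c * (h ^ m / (m.factorial : ℝ))
      = l ⟨(c : ℕ) - (p + 1), by have := c.isLt; omega⟩ ^ j *
          (Real.exp (l ⟨(c : ℕ) - (p + 1), by have := c.isLt; omega⟩ * h)
            - ∑ m ∈ Finset.range (p + r - j + 1),
                (l ⟨(c : ℕ) - (p + 1), by have := c.isLt; omega⟩ * h) ^ m / (m.factorial : ℝ)) := by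
    intro c hc
    simp only [basisD, VandN, dif_neg hc]
    rw [mul_sub, Finset.mul_sum]
    congr 1
    apply Finset.sum_congr rfl
    intro m _
    rw [pow_add, mul_pow]
    ring
  -- Cauchy–Schwarz bound on the exponential coefficients
  have hcs : ∀ c : Fin (p + r + 1), p < (c : ℕ) →
      |coef c| ≤ Real.sqrt (∑ i, ((Vand p r l)⁻¹ c i) ^ 2) * W := by
    intro c hc
    set w : Fin (p + r + 1) → ℝ :=
      fun i => if p < (i : ℕ) then iteratedDeriv (i : ℕ) f x else 0 with hw
    have hrepr : coef c = ∑ i, (Vand p r l)⁻¹ c i * w i := by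
      rw [hcoef]
      simp only [Matrix.mulVec, dotProduct, vder]
      apply Finset.sum_congr rfl
      intro i _
      by_cases hi : p < (i : ℕ)
      · rw [hw]; simp only [if_pos hi]
      · rw [vand_inv_lower p r l hdet c i hc (by omega), zero_mul, zero_mul]
    have hCS : (∑ i, (Vand p r l)⁻¹ c i * w i) ^ 2
        ≤ (∑ i, ((Vand p r l)⁻¹ c i) ^ 2) * ∑ i, w i ^ 2 :=
      Finset.sum_mul_sq_le_sq_mul_sq Finset.univ _ _
    have hwW : Real.sqrt (∑ i, w i ^ 2) ≤ W := by
      rw [hW]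
      unfold enorm2
      apply Real.sqrt_le_sqrt
      have e1 : ∑ i, w i ^ 2
          = ∑ n ∈ Finset.range (p + r + 1),
              (if p < n then iteratedDeriv n f x else 0) ^ 2 :=
        Fin.sum_univ_eq_sum_range (fun n => (if p < n then iteratedDeriv n f x else 0) ^ 2) _
      rw [e1, show p + r + 1 = (p + 1) + r by omega, sum_range_split]
      rw [Finset.sum_eq_zero (fun n hn => by
        rw [if_neg (by have := Finset.mem_range.1 hn; omega)]; exact zero_pow (by norm_num))]
      rw [zero_add]
      have e2 : ∑ i : Fin (p + r - kj + 1),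
          (iteratedDeriv (kj + (i : ℕ)) f x) ^ 2
          = ∑ n ∈ Finset.range (p + r - kj + 1), (iteratedDeriv (kj + n) f x) ^ 2 :=
        Fin.sum_univ_eq_sum_range (fun n => (iteratedDeriv (kj + n) f x) ^ 2) _
      rw [e2, show p + r - kj + 1 = (p + 1 - kj) + r by omega, sum_range_split]
      have e3 : ∑ m ∈ Finset.range r, (iteratedDeriv (kj + (p + 1 - kj + m)) f x) ^ 2
          = ∑ m ∈ Finset.range r,
              (if p < p + 1 + m then iteratedDeriv (p + 1 + m) f x else 0) ^ 2 := by
        apply Finset.sum_congr rfl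
        intro m _
        rw [if_pos (by omega)]
        congr 2
        omega
      rw [← e3]
      exact le_add_of_nonneg_left (Finset.sum_nonneg fun n _ => sq_nonneg _)
    calc |coef c| = Real.sqrt ((coef c) ^ 2) := (Real.sqrt_sq_eq_abs _).symm
      _ ≤ Real.sqrt ((∑ i, ((Vand p r l)⁻¹ c i) ^ 2) * ∑ i, w i ^ 2) := by
          rw [hrepr]; exact Real.sqrt_le_sqrt hCS
      _ = Real.sqrt (∑ i, ((Vand p r l)⁻¹ c i) ^ 2) * Real.sqrt (∑ i, w i ^ 2) :=
          Real.sqrt_mul (Finset.sum_nonneg fun i _ => sq_nonneg _) _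
      _ ≤ Real.sqrt (∑ i, ((Vand p r l)⁻¹ c i) ^ 2) * W := by
          exact mul_le_mul_of_nonneg_left hwW (Real.sqrt_nonneg _)
  -- final assembly
  calc |∑ c, coef c * (basisD p r l j c h - ∑ m ∈ Finset.range (p + r - j + 1),
          VandN p r l (j + m) c * (h ^ m / (m.factorial : ℝ)))|
      ≤ ∑ c, |coef c * (basisD p r l j c h - ∑ m ∈ Finset.range (p + r - j + 1),
          VandN p r l (j + m) c * (h ^ m / (m.factorial : ℝ)))| :=
        Finset.abs_sum_le_sum_abs _ _
    _ ≤ ∑ c, dcBound p r l R c * (W * |h| ^ (p + r + 1 - j)) := by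
        apply Finset.sum_le_sum
        intro c _
        by_cases hc : (c : ℕ) ≤ p
        · rw [hcpoly c hc, mul_zero, abs_zero]
          simp only [dcBound, dif_pos hc, zero_mul, le_refl]
        · rw [hcexp c hc, abs_mul]
          set lk := l ⟨(c : ℕ) - (p + 1), by have := c.isLt; omega⟩ with hlk
          have hB : |lk * h| ≤ |lk| * R := by
            rw [abs_mul]
            exact mul_le_mul_of_nonneg_left hh (abs_nonneg lk)
          have hE := exp_taylor_remainder (|lk| * R) (p + r - j + 1) (lk * h) hB
          have h2 : |lk ^ j * (Real.exp (lk * h)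
              - ∑ m ∈ Finset.range (p + r - j + 1), (lk * h) ^ m / (m.factorial : ℝ))|
              ≤ |lk| ^ (p + r + 1) * Real.exp (|lk| * R) * |h| ^ (p + r + 1 - j) := by
            rw [abs_mul, abs_pow]
            calc |lk| ^ j * |Real.exp (lk * h)
                - ∑ m ∈ Finset.range (p + r - j + 1), (lk * h) ^ m / (m.factorial : ℝ)|
                ≤ |lk| ^ j * (Real.exp (|lk| * R) * |lk * h| ^ (p + r - j + 1)) :=
                  mul_le_mul_of_nonneg_left hE (pow_nonneg (abs_nonneg _) _)
              _ = |lk| ^ (p + r + 1) * Real.exp (|lk| * R) * |h| ^ (p + r + 1 - j) := by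
                  rw [abs_mul, mul_pow, show p + r + 1 - j = p + r - j + 1 by omega,
                    show p + r + 1 = j + (p + r - j + 1) by omega, pow_add]
                  ring
          calc |coef c| * |lk ^ j * (Real.exp (lk * h)
              - ∑ m ∈ Finset.range (p + r - j + 1), (lk * h) ^ m / (m.factorial : ℝ))|
              ≤ (Real.sqrt (∑ i, ((Vand p r l)⁻¹ c i) ^ 2) * W) *
                (|lk| ^ (p + r + 1) * Real.exp (|lk| * R) * |h| ^ (p + r + 1 - j)) := by
                apply mul_le_mul (hcs c (by omega)) h2 (abs_nonneg _)
                positivity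
            _ = dcBound p r l R c * (W * |h| ^ (p + r + 1 - j)) := by
                simp only [dcBound, dif_neg hc, ← hlk]
                ring
    _ = C0 * (W * |h| ^ (p + r + 1 - j)) := by rw [← Finset.sum_mul, ← hC0]
    _ ≤ (C0 + 1) * W * |h| ^ (p + r + 1 - j) := by
        rw [mul_assoc]
        apply mul_le_mul_of_nonneg_right (by linarith)
        positivity
end

section
/- For $f \in C^d_u(\mathbb{R})$ (all derivatives up to order $d$ bounded and uniformly continuous), any $0 < R < 1$, and $j = 0,\dots,d$, there is a constant $C$ depending only on $\Lambda$, $R$, and $\|f\|_{d,\infty}$ such that $|\partial_h^j T_{p,\Lambda} f(x,h) - T_{d-j} f^{(j)}(x,h)| \le C\,|h|^{d-j+1}$ uniformly in $x \in \mathbb{R}$ and $|h| < R$. -/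
open scoped Matrix

/-- `f ∈ C^d_u(ℝ)`: `d`-times continuously differentiable with all derivatives
up to order `d` bounded and uniformly continuous. -/
def CdU (d : ℕ) (f : ℝ → ℝ) : Prop :=
  ContDiff ℝ (d : ℕ) f ∧
    ∀ i ≤ d, (∃ B, ∀ x, |iteratedDeriv i f x| ≤ B) ∧
      UniformContinuous (iteratedDeriv i f)

open Finset

lemma itD_pow (c j : ℕ) :
    iteratedDeriv j (fun t : ℝ => t ^ c) =
      fun t => (∏ i ∈ range j, ((c : ℝ) - i)) * t ^ (c - j) := by
  rw [iteratedDeriv_eq_iterate]; exact iter_deriv_pow' c j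

lemma prod_fac (j : ℕ) : (∏ i ∈ range j, ((j : ℝ) - i)) = (j.factorial : ℝ) := by
  have : (∏ i ∈ range j, ((j : ℝ) - i)) = ((j.descFactorial j : ℕ) : ℝ) := by
    rw [Nat.descFactorial_eq_prod_range, Nat.cast_prod]
    exact Finset.prod_congr rfl fun i hi =>
      (Nat.cast_sub (le_of_lt (mem_range.1 hi))).symm
  rw [this, Nat.descFactorial_self]

lemma itD_pow_zero (c j : ℕ) :
    (∏ i ∈ range j, ((c : ℝ) - i)) * (0:ℝ) ^ (c - j)
      = if j = c then (c.factorial : ℝ) else 0 := by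
  rcases lt_trichotomy j c with h | h | h
  · rw [if_neg h.ne, zero_pow (by omega), mul_zero]
  · subst h; rw [if_pos rfl, Nat.sub_self, pow_zero, mul_one, prod_fac]
  · rw [if_neg (by omega),
      Finset.prod_eq_zero (f := fun i : ℕ => (c:ℝ) - i) (Finset.mem_range.2 h) (by simp),
      zero_mul]

lemma itD_finsum {ι : Type*} (s : Finset ι) (F : ι → ℝ → ℝ)
    (hF : ∀ i ∈ s, ContDiff ℝ (⊤ : ℕ∞) (F i)) (j : ℕ) (x : ℝ) :
    iteratedDeriv j (fun t => ∑ i ∈ s, F i t) x = ∑ i ∈ s, iteratedDeriv j (F i) x := by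
  have h := iteratedFDeriv_sum (𝕜 := ℝ) (f := F) (u := s) (i := j)
    (fun i hi => (hF i hi).of_le (by exact_mod_cast le_top))
  simp only [iteratedDeriv_eq_iteratedFDeriv]
  rw [show (fun t => ∑ i ∈ s, F i t) = (∑ i ∈ s, F i ·) from rfl, h]
  simp [Finset.sum_apply]

lemma itD_const_mul {F : ℝ → ℝ} (hF : ContDiff ℝ (⊤ : ℕ∞) F) (a : ℝ) (j : ℕ) (x : ℝ) :
    iteratedDeriv j (fun t => a * F t) x = a * iteratedDeriv j F x := by
  rw [← iteratedDerivWithin_univ, ← iteratedDerivWithin_univ]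
  exact iteratedDerivWithin_const_mul (Set.mem_univ x) uniqueDiffOn_univ a
    (hF.of_le (by exact_mod_cast (le_top : (j : ℕ∞) ≤ ⊤))).contDiffWithinAt

lemma itD_itD (F : ℝ → ℝ) (j i : ℕ) :
    iteratedDeriv i (iteratedDeriv j F) = iteratedDeriv (j + i) F := by
  induction i with
  | zero => simp
  | succ i ih => rw [iteratedDeriv_succ, ih, show j + (i+1) = (j+i)+1 from rfl, iteratedDeriv_succ]

lemma itD_sub {F G : ℝ → ℝ} (hF : ContDiff ℝ (⊤ : ℕ∞) F) (hG : ContDiff ℝ (⊤ : ℕ∞) G) (j : ℕ) (x : ℝ) :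
    iteratedDeriv j (fun t => F t - G t) x = iteratedDeriv j F x - iteratedDeriv j G x := by
  rw [← iteratedDerivWithin_univ, ← iteratedDerivWithin_univ, ← iteratedDerivWithin_univ]
  exact iteratedDerivWithin_sub (Set.mem_univ x) uniqueDiffOn_univ
    (hF.of_le (by exact_mod_cast (le_top : (j : ℕ∞) ≤ ⊤))).contDiffWithinAt (hG.of_le (by exact_mod_cast (le_top : (j : ℕ∞) ≤ ⊤))).contDiffWithinAt


lemma mvt_abs {ψ : ℝ → ℝ} (hψ : Differentiable ℝ ψ) {K h : ℝ}
    (hb : ∀ t, |t| ≤ |h| → |deriv ψ t| ≤ K) : |ψ h - ψ 0| ≤ K * |h| := by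
  rcases le_or_gt 0 h with hh | hh
  · have := norm_image_sub_le_of_norm_deriv_le_segment' (f := ψ) (f' := deriv ψ) (a := 0) (b := h)
      (fun x _ => (hψ x).hasDerivAt.hasDerivWithinAt)
      (fun x hx => hb x (by
        rw [abs_of_nonneg hx.1, abs_of_nonneg hh]; exact le_of_lt hx.2))
      h ⟨hh, le_refl _⟩
    simpa [Real.norm_eq_abs, abs_of_nonneg hh] using this
  · have := norm_image_sub_le_of_norm_deriv_le_segment' (f := ψ) (f' := deriv ψ) (a := h) (b := 0)
      (fun x _ => (hψ x).hasDerivAt.hasDerivWithinAt)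
      (fun x hx => hb x (by
        rw [abs_of_nonpos (le_of_lt hx.2), abs_of_neg hh]
        exact neg_le_neg hx.1))
      0 ⟨le_of_lt hh, le_refl _⟩
    rw [abs_sub_comm]
    calc |ψ 0 - ψ h| ≤ K * (0 - h) := by simpa [Real.norm_eq_abs] using this
    _ = K * |h| := by rw [abs_of_neg hh]; ring

lemma taylor_rem : ∀ m : ℕ, ∀ (M : ℝ) (ψ : ℝ → ℝ), ContDiff ℝ (⊤ : ℕ∞) ψ →
    (∀ i ≤ m, iteratedDeriv i ψ 0 = 0) → ∀ h : ℝ,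
    (∀ t, |t| ≤ |h| → |iteratedDeriv (m+1) ψ t| ≤ M) → |ψ h| ≤ M * |h| ^ (m+1) := by
  intro m
  induction m with
  | zero =>
    intro M ψ hψ h0 h hb
    have hd : Differentiable ℝ ψ := hψ.differentiable (by simp)
    have := mvt_abs hd (K := M) (h := h) (fun t ht => by
      simpa [iteratedDeriv_one] using hb t ht)
    have hψ0 : ψ 0 = 0 := by simpa using h0 0 le_rfl
    rw [hψ0, sub_zero] at this
    simpa using this
  | succ m ih =>
    intro M ψ hψ h0 h hb
    have hM : 0 ≤ M := le_trans (abs_nonneg _) (hb 0 (by simp))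
    have hφ : ContDiff ℝ (⊤ : ℕ∞) (deriv ψ) := by
      have := (contDiff_infty_iff_deriv.mp (by exact_mod_cast hψ)).2
      exact_mod_cast this
    have hφ0 : ∀ i ≤ m, iteratedDeriv i (deriv ψ) 0 = 0 := fun i hi => by
      have := h0 (i+1) (by omega)
      rwa [iteratedDeriv_succ'] at this
    have key : ∀ t, |t| ≤ |h| → |deriv ψ t| ≤ M * |h| ^ (m+1) := by
      intro t ht
      have h1 : |deriv ψ t| ≤ M * |t| ^ (m+1) := ih M (deriv ψ) hφ hφ0 t (fun s hs => by
        have := hb s (le_trans hs ht)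
        rwa [iteratedDeriv_succ'] at this)
      exact le_trans h1 (mul_le_mul_of_nonneg_left
        (pow_le_pow_left₀ (abs_nonneg t) ht _) hM)
    have hd : Differentiable ℝ ψ := hψ.differentiable (by simp)
    have := mvt_abs hd key
    have hψ0 : ψ 0 = 0 := by simpa using h0 0 (by omega)
    calc |ψ h| = |ψ h - ψ 0| := by rw [hψ0, sub_zero]
    _ ≤ M * |h| ^ (m+1) * |h| := this
    _ = M * |h| ^ (m+2) := by ring

open Finset Matrix

noncomputable def Dcol (p r : ℕ) (l : Fin r → ℝ) (j : ℕ) (c : Fin (p + r + 1)) : ℝ → ℝ :=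
  fun h =>
    if hc : (c : ℕ) ≤ p then (∏ i ∈ Finset.range j, (((c : ℕ) : ℝ) - i)) * h ^ ((c : ℕ) - j)
    else l ⟨(c : ℕ) - (p + 1), by have := c.isLt; omega⟩ ^ j *
      Real.exp (l ⟨(c : ℕ) - (p + 1), by have := c.isLt; omega⟩ * h)

lemma expBasis_eq_pos (p r : ℕ) (l : Fin r → ℝ) (c : Fin (p + r + 1)) (hc : (c : ℕ) ≤ p) :
    (fun h => expBasis p r l h c) = fun h : ℝ => h ^ (c : ℕ) := by
  funext h; rw [expBasis, dif_pos hc]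

lemma expBasis_eq_neg (p r : ℕ) (l : Fin r → ℝ) (c : Fin (p + r + 1)) (hc : ¬ (c : ℕ) ≤ p) :
    (fun h => expBasis p r l h c) =
      fun h : ℝ => Real.exp (l ⟨(c : ℕ) - (p + 1), by have := c.isLt; omega⟩ * h) := by
  funext h; rw [expBasis, dif_neg hc]

lemma Dcol_eq_pos (p r : ℕ) (l : Fin r → ℝ) (j : ℕ) (c : Fin (p + r + 1)) (hc : (c : ℕ) ≤ p) :
    Dcol p r l j c =
      fun h : ℝ => (∏ i ∈ Finset.range j, (((c : ℕ) : ℝ) - i)) * h ^ ((c : ℕ) - j) := by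
  funext h; rw [Dcol, dif_pos hc]

lemma Dcol_eq_neg (p r : ℕ) (l : Fin r → ℝ) (j : ℕ) (c : Fin (p + r + 1)) (hc : ¬ (c : ℕ) ≤ p) :
    Dcol p r l j c =
      fun h : ℝ => l ⟨(c : ℕ) - (p + 1), by have := c.isLt; omega⟩ ^ j *
        Real.exp (l ⟨(c : ℕ) - (p + 1), by have := c.isLt; omega⟩ * h) := by
  funext h; rw [Dcol, dif_neg hc]

lemma expBasis_col_contDiff (p r : ℕ) (l : Fin r → ℝ) (c : Fin (p + r + 1)) :
    ContDiff ℝ (⊤ : ℕ∞) (fun h => expBasis p r l h c) := by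
  by_cases hc : (c : ℕ) ≤ p
  · rw [expBasis_eq_pos p r l c hc]; exact contDiff_id.pow _
  · rw [expBasis_eq_neg p r l c hc]
    exact Real.contDiff_exp.comp (contDiff_const.mul contDiff_id)

lemma Dcol_contDiff (p r : ℕ) (l : Fin r → ℝ) (j : ℕ) (c : Fin (p + r + 1)) :
    ContDiff ℝ (⊤ : ℕ∞) (Dcol p r l j c) := by
  by_cases hc : (c : ℕ) ≤ p
  · rw [Dcol_eq_pos p r l j c hc]; exact contDiff_const.mul (contDiff_id.pow _)
  · rw [Dcol_eq_neg p r l j c hc]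
    exact contDiff_const.mul (Real.contDiff_exp.comp (contDiff_const.mul contDiff_id))

lemma itD_expBasis_col (p r : ℕ) (l : Fin r → ℝ) (j : ℕ) (c : Fin (p + r + 1)) :
    iteratedDeriv j (fun h => expBasis p r l h c) = Dcol p r l j c := by
  by_cases hc : (c : ℕ) ≤ p
  · rw [expBasis_eq_pos p r l c hc, Dcol_eq_pos p r l j c hc, iteratedDeriv_eq_iterate]
    exact iter_deriv_pow' _ j
  · rw [expBasis_eq_neg p r l c hc, Dcol_eq_neg p r l j c hc]
    exact iteratedDeriv_exp_const_mul j _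

lemma vand_isUnit (p r : ℕ) (l : Fin r → ℝ) (h0 : ∀ k, l k ≠ 0)
    (hinj : Function.Injective l) : IsUnit (Vand p r l) := by
  rw [← Matrix.vecMul_injective_iff_isUnit, Matrix.vecMul_injective_iff,
    Fintype.linearIndependent_iff]
  intro a ha
  have hcol : ∀ c, ∑ i, a i * Vand p r l i c = 0 := by
    intro c
    have := congrFun ha c
    simpa [Finset.sum_apply] using this
  -- Step 1: a i = 0 for i ≤ p
  have hstep1 : ∀ i : Fin (p + r + 1), (i : ℕ) ≤ p → a i = 0 := by
    intro i hi
    have h1 := hcol i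
    have h2 : ∑ i' : Fin (p + r + 1), a i' * Vand p r l i' i
        = a i * ((i : ℕ).factorial : ℝ) := by
      rw [Finset.sum_eq_single i]
      · simp [Vand, hi]
      · intro b _ hb
        have : ¬ ((b : ℕ) = (i : ℕ)) := fun h => hb (Fin.ext h)
        simp [Vand, hi, this]
      · simp
    rw [h2] at h1
    have hfac : ((i : ℕ).factorial : ℝ) ≠ 0 :=
      Nat.cast_ne_zero.mpr (Nat.factorial_ne_zero (i : ℕ))
    exact (mul_eq_zero.mp h1).resolve_right hfac
  -- Step 2: the exponential part
  have hsum : ∀ k : Fin r, ∑ m : Fin r,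
      l k ^ (m : ℕ) * a ⟨p + 1 + (m : ℕ), by have := m.isLt; omega⟩ = 0 := by
    intro k
    have h1 := hcol ⟨p + 1 + (k : ℕ), by have := k.isLt; omega⟩
    have hc : ¬ ((p + 1 + (k : ℕ)) ≤ p) := by omega
    have h2 : ∑ i : Fin (p + r + 1),
          a i * Vand p r l i ⟨p + 1 + (k : ℕ), by have := k.isLt; omega⟩
        = ∑ i : Fin (p + r + 1), a i * l k ^ (i : ℕ) := by
      refine Finset.sum_congr rfl fun i _ => ?_
      congr 1
      show (if hc' : (p + 1 + (k : ℕ)) ≤ p then _ else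
        l ⟨p + 1 + (k : ℕ) - (p + 1), _⟩ ^ (i : ℕ)) = l k ^ (i : ℕ)
      rw [dif_neg hc]
      congr 2
      exact Fin.ext (show p + 1 + (k : ℕ) - (p + 1) = (k : ℕ) by omega)
    rw [h2] at h1
    have h3 : ∑ i : Fin (p + r + 1), a i * l k ^ (i : ℕ)
        = ∑ i ∈ Finset.univ.filter (fun i : Fin (p + r + 1) => p < (i : ℕ)),
            a i * l k ^ (i : ℕ) := by
      rw [Finset.sum_filter_of_ne]
      intro i _ hne
      by_contra hip
      exact hne (by rw [hstep1 i (by omega), zero_mul])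
    have h4 : ∑ i ∈ Finset.univ.filter (fun i : Fin (p + r + 1) => p < (i : ℕ)),
            a i * l k ^ (i : ℕ)
        = ∑ m : Fin r, a ⟨p + 1 + (m : ℕ), by have := m.isLt; omega⟩
            * l k ^ (p + 1 + (m : ℕ)) := by
      rw [eq_comm]
      refine Finset.sum_bij'
        (i := fun (m : Fin r) (_ : m ∈ Finset.univ) =>
          (⟨p + 1 + (m : ℕ), by have := m.isLt; omega⟩ : Fin (p + r + 1)))
        (j := fun i hi => (⟨(i : ℕ) - (p + 1), by
          simp only [Finset.mem_filter] at hi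
          have := i.isLt; omega⟩ : Fin r)) ?_ ?_ ?_ ?_ ?_
      · intro m _
        simp only [Finset.mem_filter, Finset.mem_univ, true_and]
        show p < p + 1 + (m : ℕ); omega
      · intro i _; exact Finset.mem_univ _
      · intro m _
        exact Fin.ext (show p + 1 + (m : ℕ) - (p + 1) = (m : ℕ) by omega)
      · intro i hi
        simp only [Finset.mem_filter] at hi
        exact Fin.ext (show p + 1 + ((i : ℕ) - (p + 1)) = (i : ℕ) by omega)
      · intro m _; rfl
    have h5 : ∑ m : Fin r, a ⟨p + 1 + (m : ℕ), by have := m.isLt; omega⟩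
            * l k ^ (p + 1 + (m : ℕ))
        = l k ^ (p + 1) * ∑ m : Fin r,
            l k ^ (m : ℕ) * a ⟨p + 1 + (m : ℕ), by have := m.isLt; omega⟩ := by
      rw [Finset.mul_sum]
      refine Finset.sum_congr rfl fun m _ => ?_
      rw [pow_add]; ring
    rw [h3, h4, h5] at h1
    rcases mul_eq_zero.mp h1 with h | h
    · exact absurd h (pow_ne_zero _ (h0 k))
    · exact h
  have hbz := Matrix.eq_zero_of_forall_index_sum_pow_mul_eq_zero
    (v := fun m : Fin r => a ⟨p + 1 + (m : ℕ), by have := m.isLt; omega⟩) hinj hsum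
  intro i
  by_cases hip : (i : ℕ) ≤ p
  · exact hstep1 i hip
  · have hi' : (i : ℕ) - (p + 1) < r := by have := i.isLt; omega
    have hie : i = ⟨p + 1 + ((i : ℕ) - (p + 1)), by have := i.isLt; omega⟩ :=
      Fin.ext (show (i : ℕ) = p + 1 + ((i : ℕ) - (p + 1)) by omega)
    rw [hie]
    exact congrFun hbz ⟨(i : ℕ) - (p + 1), hi'⟩
lemma itD_mul_const {F : ℝ → ℝ} (hF : ContDiff ℝ (⊤ : ℕ∞) F) (a : ℝ) (j : ℕ) (x : ℝ) :
    iteratedDeriv j (fun t => F t * a) x = iteratedDeriv j F x * a := by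
  have h : (fun t => F t * a) = fun t => a * F t := by funext t; ring
  rw [h, itD_const_mul hF, mul_comm]

lemma itD_Tgen (p r : ℕ) (l : Fin r → ℝ) (f : ℝ → ℝ) (x : ℝ) (j : ℕ) (h : ℝ) :
    iteratedDeriv j (fun t => Tgen p r l f x t) h =
      ∑ c, Dcol p r l j c h * ((Vand p r l)⁻¹ *ᵥ vder (p + r) f x) c := by
  have hT : (fun t => Tgen p r l f x t)
      = fun t => ∑ c, (fun s => expBasis p r l s c) t
          * ((Vand p r l)⁻¹ *ᵥ vder (p + r) f x) c := rfl
  rw [hT, itD_finsum Finset.univ _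
    (fun c _ => (expBasis_col_contDiff p r l c).mul contDiff_const) j h]
  refine Finset.sum_congr rfl fun c _ => ?_
  rw [itD_mul_const (expBasis_col_contDiff p r l c) _ j h, itD_expBasis_col p r l j c]

lemma Dcol_zero (p r : ℕ) (l : Fin r → ℝ) (j : ℕ) (hj : j < p + r + 1)
    (c : Fin (p + r + 1)) :
    Dcol p r l j c 0 = Vand p r l ⟨j, hj⟩ c := by
  by_cases hc : (c : ℕ) ≤ p
  · rw [Dcol_eq_pos p r l j c hc]
    simp only [itD_pow_zero, Vand, Matrix.of_apply, dif_pos hc]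
  · rw [Dcol_eq_neg p r l j c hc]
    simp [Vand, hc, Real.exp_zero]

lemma Tcl_contDiff (n : ℕ) (F : ℝ → ℝ) (x : ℝ) :
    ContDiff ℝ (⊤ : ℕ∞) (fun h => Tcl n F x h) :=
  ContDiff.sum fun _ _ => contDiff_const.mul (contDiff_id.pow _)

lemma itD_Tcl (n : ℕ) (F : ℝ → ℝ) (x : ℝ) (i : ℕ) (t : ℝ) :
    iteratedDeriv i (fun h => Tcl n F x h) t
      = ∑ k ∈ Finset.range (n+1), iteratedDeriv k F x / (k.factorial : ℝ)
          * ((∏ q ∈ Finset.range i, ((k : ℝ) - q)) * t ^ (k - i)) := by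
  have hT : (fun h => Tcl n F x h) = fun h => ∑ k ∈ Finset.range (n+1),
      (fun s : ℝ => iteratedDeriv k F x / (k.factorial : ℝ) * s ^ k) h := rfl
  rw [hT, itD_finsum (Finset.range (n+1))
    (fun k s => iteratedDeriv k F x / (k.factorial : ℝ) * s ^ k)
    (fun k _ => contDiff_const.mul (contDiff_id.pow _)) i t]
  refine Finset.sum_congr rfl fun k _ => ?_
  rw [itD_const_mul (F := fun s : ℝ => s ^ k) (contDiff_id.pow k) _ i t]
  rw [congrFun (itD_pow k i) t]

lemma itD_Tcl_zero (n : ℕ) (F : ℝ → ℝ) (x : ℝ) (i : ℕ) (hi : i ≤ n) :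
    iteratedDeriv i (fun h => Tcl n F x h) 0 = iteratedDeriv i F x := by
  rw [itD_Tcl, Finset.sum_eq_single i]
  · rw [itD_pow_zero i i, if_pos rfl, div_mul_cancel₀]
    exact Nat.cast_ne_zero.mpr (Nat.factorial_ne_zero i)
  · intro k _ hk
    rw [itD_pow_zero k i, if_neg (fun hik => hk hik.symm), mul_zero]
  · intro hmem
    exact absurd (Finset.mem_range.2 (by omega)) hmem

lemma itD_Tcl_top (n : ℕ) (F : ℝ → ℝ) (x : ℝ) (t : ℝ) :
    iteratedDeriv (n+1) (fun h => Tcl n F x h) t = 0 := by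
  rw [itD_Tcl]
  refine Finset.sum_eq_zero fun k hk => ?_
  have hk' : k < n + 1 := Finset.mem_range.mp hk
  rw [Finset.prod_eq_zero (f := fun q : ℕ => (k : ℝ) - q)
    (Finset.mem_range.2 hk') (by simp), zero_mul, mul_zero]
/-- for `f ∈ C^d_u(ℝ)` and `0 < R < 1` there is `C` with
`|∂_h^j T_{p,Λ} f(x,h) - T_{d-j} f^(j)(x,h)| ≤ C |h|^{d-j+1}` uniformly in
`x ∈ ℝ` and `|h| < R`, for every `j = 0,…,d`. -/
theorem tgen_deriv_sub_taylor_uniform_bound (p r : ℕ) (hr : 1 ≤ r)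
    (l : Fin r → ℝ) (h0 : ∀ k, l k ≠ 0) (hinj : Function.Injective l)
    (f : ℝ → ℝ) (hf : CdU (p + r) f)
    (R : ℝ) (hR0 : 0 < R) (hR1 : R < 1) :
    ∃ C > 0, ∀ j : ℕ, j ≤ p + r → ∀ x h : ℝ, |h| < R →
      |iteratedDeriv j (fun t => Tgen p r l f x t) h -
          Tcl (p + r - j) (iteratedDeriv j f) x h| ≤
        C * |h| ^ (p + r - j + 1) := by
  classical
  choose! Bi hBi using fun i (hi : i ≤ p + r) => (hf.2 i hi).1
  set B : ℝ := ∑ i ∈ Finset.range (p + r + 1), |Bi i| with hB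
  have hBnn : 0 ≤ B := Finset.sum_nonneg fun i _ => abs_nonneg _
  have hBb : ∀ i, i ≤ p + r → ∀ x, |iteratedDeriv i f x| ≤ B := by
    intro i hi x
    calc |iteratedDeriv i f x| ≤ Bi i := hBi i hi x
    _ ≤ |Bi i| := le_abs_self _
    _ ≤ B := Finset.single_le_sum (f := fun i => |Bi i|) (fun j _ => abs_nonneg _)
        (Finset.mem_range.2 (by omega))
  have hV : IsUnit (Vand p r l) := vand_isUnit p r l h0 hinj
  have hVv : ∀ v, Vand p r l *ᵥ ((Vand p r l)⁻¹ *ᵥ v) = v := by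
    intro v
    rw [Matrix.mulVec_mulVec, Matrix.mul_nonsing_inv _
      ((Matrix.isUnit_iff_isUnit_det _).mp hV), Matrix.one_mulVec]
  -- uniform bound on the weight vector
  have hw : ∀ x c, |((Vand p r l)⁻¹ *ᵥ vder (p + r) f x) c|
      ≤ (∑ i, |(Vand p r l)⁻¹ c i|) * B := by
    intro x c
    have hrw : ((Vand p r l)⁻¹ *ᵥ vder (p + r) f x) c
        = ∑ i, (Vand p r l)⁻¹ c i * vder (p + r) f x i := rfl
    rw [hrw]
    calc |∑ i, (Vand p r l)⁻¹ c i * vder (p + r) f x i|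
        ≤ ∑ i, |(Vand p r l)⁻¹ c i * vder (p + r) f x i| :=
          Finset.abs_sum_le_sum_abs _ _
    _ ≤ ∑ i, |(Vand p r l)⁻¹ c i| * B := by
        refine Finset.sum_le_sum fun i _ => ?_
        rw [abs_mul]
        exact mul_le_mul_of_nonneg_left
          (hBb (i : ℕ) (by have := i.isLt; omega) x) (abs_nonneg _)
    _ = (∑ i, |(Vand p r l)⁻¹ c i|) * B := by rw [Finset.sum_mul]
  -- column bound for the (d+1)-st derivative
  set A : Fin (p + r + 1) → ℝ := fun c =>
    if hc : (c : ℕ) ≤ p then (0:ℝ)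
    else |l ⟨(c : ℕ) - (p + 1), by have := c.isLt; omega⟩| ^ (p + r + 1) *
      Real.exp |l ⟨(c : ℕ) - (p + 1), by have := c.isLt; omega⟩| with hA
  have hAnn : ∀ c, 0 ≤ A c := by
    intro c
    by_cases hc : (c : ℕ) ≤ p
    · rw [hA]; simp [dif_pos hc]
    · rw [hA]; simp only [dif_neg hc]
      positivity
  have hDb : ∀ (c : Fin (p + r + 1)) (t : ℝ), |t| ≤ 1 →
      |Dcol p r l (p + r + 1) c t| ≤ A c := by
    intro c t ht
    by_cases hc : (c : ℕ) ≤ p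
    · rw [Dcol_eq_pos p r l _ c hc]
      have hz : (∏ i ∈ Finset.range (p + r + 1), (((c : ℕ) : ℝ) - i)) = 0 :=
        Finset.prod_eq_zero (f := fun i : ℕ => ((c : ℕ) : ℝ) - i)
          (Finset.mem_range.2 c.isLt) (by simp)
      rw [hA]
      simp [hz, dif_pos hc]
    · rw [Dcol_eq_neg p r l _ c hc, hA]
      simp only [dif_neg hc]
      set lam := l ⟨(c : ℕ) - (p + 1), by have := c.isLt; omega⟩ with hlam
      rw [abs_mul, abs_pow]
      refine mul_le_mul_of_nonneg_left ?_ (pow_nonneg (abs_nonneg _) _)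
      rw [Real.abs_exp]
      apply Real.exp_le_exp.2
      calc lam * t ≤ |lam * t| := le_abs_self _
      _ = |lam| * |t| := abs_mul _ _
      _ ≤ |lam| * 1 := mul_le_mul_of_nonneg_left ht (abs_nonneg _)
      _ = |lam| := mul_one _
  set M : ℝ := ∑ c, A c * ((∑ i, |(Vand p r l)⁻¹ c i|) * B) with hM
  have hMnn : 0 ≤ M := Finset.sum_nonneg fun c _ =>
    mul_nonneg (hAnn c) (mul_nonneg (Finset.sum_nonneg fun _ _ => abs_nonneg _) hBnn)
  refine ⟨M + 1, by linarith, ?_⟩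
  intro j hj x h hhR
  have hh1 : |h| ≤ 1 := le_of_lt (lt_trans hhR hR1)
  set w := (Vand p r l)⁻¹ *ᵥ vder (p + r) f x with hwdef
  set G := fun t => Tgen p r l f x t with hG
  -- derivatives of G at 0
  have key0 : ∀ j', j' ≤ p + r → iteratedDeriv j' G 0 = iteratedDeriv j' f x := by
    intro j' hj'
    have h1 : iteratedDeriv j' G 0 = ∑ c, Dcol p r l j' c 0 * w c :=
      itD_Tgen p r l f x j' 0
    have h2 : ∑ c, Dcol p r l j' c 0 * w c
        = (Vand p r l *ᵥ w) ⟨j', by omega⟩ := by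
      have hmv : (Vand p r l *ᵥ w) ⟨j', by omega⟩
          = ∑ c, Vand p r l ⟨j', by omega⟩ c * w c := rfl
      rw [hmv]
      exact Finset.sum_congr rfl fun c _ => by
        rw [Dcol_zero p r l j' (by omega) c]
    rw [h1, h2, hwdef, hVv]
    rfl
  -- smoothness of the j-th derivative of G
  have hGj : iteratedDeriv j G = fun t => ∑ c, Dcol p r l j c t * w c :=
    funext fun t => itD_Tgen p r l f x j t
  have hGjs : ContDiff ℝ (⊤ : ℕ∞) (iteratedDeriv j G) := by
    rw [hGj]
    exact ContDiff.sum fun c _ => (Dcol_contDiff p r l j c).mul contDiff_const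
  have hTs := Tcl_contDiff (p + r - j) (iteratedDeriv j f) x
  -- the error function
  have hψs : ContDiff ℝ (⊤ : ℕ∞)
      (fun t => iteratedDeriv j G t - Tcl (p + r - j) (iteratedDeriv j f) x t) :=
    hGjs.sub hTs
  have hψ0 : ∀ i, i ≤ p + r - j → iteratedDeriv i
      (fun t => iteratedDeriv j G t - Tcl (p + r - j) (iteratedDeriv j f) x t) 0 = 0 := by
    intro i hi
    rw [itD_sub hGjs hTs i 0]
    have e2 : iteratedDeriv i (iteratedDeriv j G) 0 = iteratedDeriv (j + i) G 0 :=
      congrFun (itD_itD G j i) 0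
    have e3 : iteratedDeriv (j + i) G 0 = iteratedDeriv (j + i) f x :=
      key0 (j + i) (by omega)
    have e4 : iteratedDeriv i (fun t => Tcl (p + r - j) (iteratedDeriv j f) x t) 0
        = iteratedDeriv i (iteratedDeriv j f) x :=
      itD_Tcl_zero (p + r - j) (iteratedDeriv j f) x i hi
    have e5 : iteratedDeriv i (iteratedDeriv j f) x = iteratedDeriv (j + i) f x :=
      congrFun (itD_itD f j i) x
    rw [e2, e3, e4, e5, sub_self]
  have hψb : ∀ t, |t| ≤ |h| → |iteratedDeriv (p + r - j + 1)
      (fun t => iteratedDeriv j G t - Tcl (p + r - j) (iteratedDeriv j f) x t) t| ≤ M := by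
    intro t ht
    have ht1 : |t| ≤ 1 := le_trans ht hh1
    rw [itD_sub hGjs hTs _ t]
    have e2 : iteratedDeriv (p + r - j + 1) (iteratedDeriv j G) t
        = iteratedDeriv (j + (p + r - j + 1)) G t :=
      congrFun (itD_itD G j (p + r - j + 1)) t
    have e2' : j + (p + r - j + 1) = p + r + 1 := by omega
    have e3 : iteratedDeriv (p + r - j + 1)
        (fun t => Tcl (p + r - j) (iteratedDeriv j f) x t) t = 0 :=
      itD_Tcl_top (p + r - j) (iteratedDeriv j f) x t
    rw [e2, e2', e3, sub_zero, itD_Tgen p r l f x (p + r + 1) t]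
    calc |∑ c, Dcol p r l (p + r + 1) c t * w c|
        ≤ ∑ c, |Dcol p r l (p + r + 1) c t * w c| := Finset.abs_sum_le_sum_abs _ _
    _ ≤ ∑ c, A c * ((∑ i, |(Vand p r l)⁻¹ c i|) * B) := by
        refine Finset.sum_le_sum fun c _ => ?_
        rw [abs_mul]
        exact mul_le_mul (hDb c t ht1) (hw x c) (abs_nonneg _) (hAnn c)
    _ = M := hM.symm
  have hfin := taylor_rem (p + r - j) M
    (fun t => iteratedDeriv j G t - Tcl (p + r - j) (iteratedDeriv j f) x t)
    hψs hψ0 h hψb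
  calc |iteratedDeriv j G h - Tcl (p + r - j) (iteratedDeriv j f) x h|
      ≤ M * |h| ^ (p + r - j + 1) := hfin
  _ ≤ (M + 1) * |h| ^ (p + r - j + 1) := by
      apply mul_le_mul_of_nonneg_right (by linarith) (pow_nonneg (abs_nonneg _) _)
end

section
/- If a sequence of $C^d$-convergent Hermite subdivision schemes $S(A^{[n+\ell]} : n \ge 0)$, $\ell \ge 0$, has basic limit functions $F^{[\ell]}$ (obtained from initial data $\delta I_{d+1}$), then these satisfy the level-dependent refinement equation $F^{[\ell]} = \sum_{k\in\mathbb{Z}} D^{-1} F^{[\ell+1]}(2\,\cdot - k)\, A^{[\ell]}_k$ for all $\ell \ge 0$. -/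
open scoped Matrix

/-- The diagonal matrix `D = diag(1, 1/2, …, 2^{-d})`. -/
noncomputable def Dmat (d : ℕ) : Matrix (Fin (d+1)) (Fin (d+1)) ℝ :=
  Matrix.diagonal fun i => ((2 : ℝ) ^ (i : ℕ))⁻¹

/-- The right-associative iterated mask product
`iterMask A ℓ m = A^[ℓ+m-1] *₂ ⋯ *₂ A^[ℓ]` (with `iterMask A ℓ 0 = δ I`). -/
noncomputable def iterMask (d : ℕ) (A : ℕ → ℤ → Matrix (Fin (d+1)) (Fin (d+1)) ℝ)
    (ℓ : ℕ) : ℕ → ℤ → Matrix (Fin (d+1)) (Fin (d+1)) ℝ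
  | 0 => fun k => if k = 0 then 1 else 0
  | m + 1 => conv d 2 (A (ℓ + m)) (iterMask d A ℓ m)

/-- The rescaled refinement data `B^[n] = D^n C^[n]` of the Hermite subdivision
scheme `S(A^[ℓ+n] : n ≥ 0)` applied to matrix initial data `δ I`:
`B^[0] = δ I`, `B^[n+1]_j = ∑_k A^[ℓ+n]_{j-2k} B^[n]_k`. -/
noncomputable def refineB (d : ℕ) (A : ℕ → ℤ → Matrix (Fin (d+1)) (Fin (d+1)) ℝ)
    (ℓ : ℕ) : ℕ → ℤ → Matrix (Fin (d+1)) (Fin (d+1)) ℝ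
  | 0 => fun k => if k = 0 then 1 else 0
  | n + 1 => fun j => ∑ᶠ k : ℤ, A (ℓ + n) (j - 2 * k) * refineB d A ℓ n k

open Filter

/-- Auxiliary: the key level-shifting identity for the refinement data. -/
lemma refineB_key (d : ℕ) (A : ℕ → ℤ → Matrix (Fin (d+1)) (Fin (d+1)) ℝ)
    (hA : ∀ n, (Function.support (A n)).Finite) (ℓ : ℕ) :
    ∀ n : ℕ, ∀ j : ℤ,
      refineB d A ℓ (n+1) j = ∑ᶠ k : ℤ, refineB d A (ℓ+1) n (j - 2^n * k) * A ℓ k := by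
  intro n
  induction n with
  | zero =>
    intro j
    show (∑ᶠ k : ℤ, A (ℓ + 0) (j - 2 * k) * refineB d A ℓ 0 k) = _
    rw [finsum_eq_single _ (0 : ℤ), finsum_eq_single _ j]
    · simp [refineB]
    · intro k hk
      have h0 : refineB d A (ℓ+1) 0 (j - 2^(0:ℕ) * k) = 0 := by
        simp only [refineB, pow_zero, one_mul]
        rw [if_neg (by omega)]
      rw [h0, zero_mul]
    · intro k hk
      simp [refineB, hk]
  | succ n ih =>
    intro j
    show (∑ᶠ m : ℤ, A (ℓ + (n+1)) (j - 2 * m) * refineB d A ℓ (n+1) m) = _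
    have hstep : ∀ m : ℤ, A (ℓ + (n+1)) (j - 2 * m) * refineB d A ℓ (n+1) m
        = ∑ k ∈ (hA ℓ).toFinset,
            (A (ℓ + (n+1)) (j - 2 * m) * refineB d A (ℓ+1) n (m - 2^n * k)) * A ℓ k := by
      intro m
      rw [ih m, finsum_eq_sum_of_support_subset _
        (s := (hA ℓ).toFinset) (by
          intro k hk
          simp only [Function.mem_support, ne_eq] at hk
          simp only [Set.Finite.coe_toFinset, Function.mem_support, ne_eq]
          intro h0
          exact hk (by simp [h0])), Finset.mul_sum]
      exact Finset.sum_congr rfl fun k _ => by rw [mul_assoc]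
    rw [finsum_congr hstep]
    have hsupp : ∀ k : ℤ, (Function.support fun m : ℤ =>
        (A (ℓ + (n+1)) (j - 2 * m) * refineB d A (ℓ+1) n (m - 2^n * k)) * A ℓ k).Finite := by
      intro k
      apply Set.Finite.subset (((hA (ℓ + (n+1))).preimage
        (Set.injOn_of_injective (f := fun m : ℤ => j - 2 * m)
          (fun a b h => by dsimp only at h; omega))))
      intro m hm
      simp only [Function.mem_support, ne_eq] at hm
      simp only [Set.mem_preimage, Function.mem_support, ne_eq]
      intro h0
      exact hm (by simp [h0])
    rw [finsum_sum_comm _ _ (fun k _ => hsupp k)]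
    rw [(finsum_eq_sum_of_support_subset
        (fun k : ℤ => refineB d A (ℓ+1) (n+1) (j - 2^(n+1) * k) * A ℓ k)
        (s := (hA ℓ).toFinset) (by
          intro k hk
          simp only [Function.mem_support, ne_eq] at hk
          simp only [Set.Finite.coe_toFinset, Function.mem_support, ne_eq]
          intro h0
          exact hk (by simp [h0])))]
    refine Finset.sum_congr rfl fun k _ => ?_
    rw [← finsum_mul' _ _ (by
      apply Set.Finite.subset (((hA (ℓ + (n+1))).preimage
        (Set.injOn_of_injective (f := fun m : ℤ => j - 2 * m)
          (fun a b h => by dsimp only at h; omega))))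
      intro m hm
      simp only [Function.mem_support, ne_eq] at hm
      simp only [Set.mem_preimage, Function.mem_support, ne_eq]
      intro h0
      exact hm (by simp [h0]))]
    congr 1
    symm
    show refineB d A (ℓ+1) (n+1) (j - 2^(n+1) * k) = _
    show (∑ᶠ m : ℤ, A ((ℓ+1) + n) ((j - 2^(n+1) * k) - 2 * m) * refineB d A (ℓ+1) n m) = _
    rw [← finsum_comp_equiv (Equiv.addRight ((2:ℤ)^n * k))
      (f := fun m : ℤ => A (ℓ + (n+1)) (j - 2 * m) * refineB d A (ℓ+1) n (m - 2^n * k))]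
    apply finsum_congr
    intro m
    have h1 : (ℓ+1) + n = ℓ + (n+1) := by omega
    have h2 : (j - 2^(n+1) * k) - 2 * m = j - 2 * (m + 2^n * k) := by ring
    have h3 : (Equiv.addRight ((2:ℤ)^n * k)) m - 2^n * k = m := by
      simp [Equiv.addRight]
    rw [h1, h2]
    congr 1
    rw [h3]

/-- Auxiliary: dyadic approximation of a real by floor points. -/
lemma floor_div_pow_tendsto (t : ℝ) :
    Tendsto (fun n : ℕ => ((⌊(2:ℝ)^n * t⌋ : ℝ) / 2^n)) atTop (nhds t) := by
  have hb : ∀ n : ℕ, ‖(⌊(2:ℝ)^n * t⌋ : ℝ) / 2^n - t‖ ≤ (1/2 : ℝ)^n := by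
    intro n
    have h2 : (0:ℝ) < 2^n := by positivity
    set y : ℝ := (2:ℝ)^n * t with hy
    have hkey : |(⌊y⌋ : ℝ) - y| ≤ 1 := by
      have h1 := Int.floor_le y
      have h2 := Int.lt_floor_add_one y
      rw [abs_le]; constructor <;> linarith
    have heq : (⌊y⌋ : ℝ) / 2^n - t = ((⌊y⌋ : ℝ) - y) / 2^n := by
      rw [sub_div, hy, mul_div_cancel_left₀ _ h2.ne']
    rw [Real.norm_eq_abs, heq, abs_div, abs_of_pos h2, div_pow, one_pow]
    gcongr
  have h0 := squeeze_zero_norm hb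
    (tendsto_pow_atTop_nhds_zero_of_lt_one (by norm_num) (by norm_num))
  have := h0.add (tendsto_const_nhds (x := t))
  simpa using this

/-- Auxiliary: convergence of the rescaled refinement data along any sequence of
dyadic points converging to `t`. -/
lemma tendstoG (d : ℕ)
    (A : ℕ → ℤ → Matrix (Fin (d+1)) (Fin (d+1)) ℝ)
    (F : ℕ → ℝ → Matrix (Fin (d+1)) (Fin (d+1)) ℝ)
    (hFcont : ∀ ℓ, Continuous (F ℓ))
    (hconv : ∀ ℓ : ℕ, ∀ ε > (0 : ℝ), ∃ N : ℕ, ∀ n ≥ N, ∀ j : ℤ,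
      ∀ a b : Fin (d+1),
        |(((Dmat d)⁻¹ ^ n * refineB d A ℓ n j) - F ℓ ((j : ℝ) / 2 ^ n)) a b| ≤ ε)
    (ℓ : ℕ) (t : ℝ) (jn : ℕ → ℤ) (φ : ℕ → ℕ)
    (hφ : Tendsto φ atTop atTop)
    (hpt : Tendsto (fun n => (jn n : ℝ) / 2^(φ n)) atTop (nhds t)) :
    Tendsto (fun n => (Dmat d)⁻¹ ^ (φ n) * refineB d A ℓ (φ n) (jn n)) atTop (nhds (F ℓ t)) := by
  refine tendsto_pi_nhds.2 ?_
  intro a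
  rw [tendsto_pi_nhds]
  intro b
  have hF : Tendsto (fun n => F ℓ ((jn n : ℝ) / 2^(φ n)) a b) atTop (nhds (F ℓ t a b)) := by
    have h := ((hFcont ℓ).tendsto t).comp hpt
    exact tendsto_pi_nhds.1 (tendsto_pi_nhds.1 h a) b
  have h0 : Tendsto (fun n =>
      ((Dmat d)⁻¹ ^ (φ n) * refineB d A ℓ (φ n) (jn n) - F ℓ ((jn n : ℝ) / 2^(φ n))) a b)
      atTop (nhds 0) := by
    rw [Metric.tendsto_atTop]
    intro ε hε
    obtain ⟨N, hN⟩ := hconv ℓ (ε/2) (by linarith)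
    obtain ⟨M, hM⟩ := Filter.eventually_atTop.1 (hφ.eventually_ge_atTop N)
    refine ⟨M, fun n hn => ?_⟩
    have h := hN (φ n) (hM n hn) (jn n) a b
    rw [Real.dist_eq, sub_zero]
    linarith
  have hsum := h0.add hF
  simp only [Matrix.sub_apply] at hsum
  simpa using hsum

/-- if for each `ℓ` the scheme `S(A^[n+ℓ] : n ≥ 0)` is convergent
with (continuous) basic limit function `F^[ℓ]` — i.e. the refinements
`C^[n] = D^{-n} B^[n]` converge to `F^[ℓ]` uniformly on the dyadic grids —
then the level-dependent refinement equation
`F^[ℓ] = ∑_k D⁻¹ F^[ℓ+1](2·-k) A^[ℓ]_k` holds. -/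
theorem refinement_equation (d : ℕ)
    (A : ℕ → ℤ → Matrix (Fin (d+1)) (Fin (d+1)) ℝ)
    (hA : ∀ n, (Function.support (A n)).Finite)
    (F : ℕ → ℝ → Matrix (Fin (d+1)) (Fin (d+1)) ℝ)
    (hFcont : ∀ ℓ, Continuous (F ℓ))
    (hconv : ∀ ℓ : ℕ, ∀ ε > (0 : ℝ), ∃ N : ℕ, ∀ n ≥ N, ∀ j : ℤ,
      ∀ a b : Fin (d+1),
        |(((Dmat d)⁻¹ ^ n * refineB d A ℓ n j) - F ℓ ((j : ℝ) / 2 ^ n)) a b| ≤ ε) :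
    ∀ ℓ : ℕ, ∀ t : ℝ,
      F ℓ t = ∑ᶠ k : ℤ, (Dmat d)⁻¹ * F (ℓ + 1) (2 * t - (k : ℝ)) * A ℓ k := by
  intro ℓ t
  classical
  set s : Finset ℤ := (hA ℓ).toFinset with hs
  have hrhs : (∑ᶠ k : ℤ, (Dmat d)⁻¹ * F (ℓ + 1) (2 * t - (k : ℝ)) * A ℓ k)
      = ∑ k ∈ s, (Dmat d)⁻¹ * F (ℓ + 1) (2 * t - (k : ℝ)) * A ℓ k := by
    apply finsum_eq_sum_of_support_subset
    intro k hk
    simp only [Function.mem_support, ne_eq] at hk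
    simp only [hs, Set.Finite.coe_toFinset, Function.mem_support, ne_eq]
    intro h0
    exact hk (by simp [h0])
  rw [hrhs]
  set jf : ℕ → ℤ := fun n => ⌊(2:ℝ)^n * t⌋ with hjf
  have hfl : Tendsto (fun n : ℕ => ((jf n : ℝ) / 2^n)) atTop (nhds t) :=
    floor_div_pow_tendsto t
  have hfl1 : Tendsto (fun n : ℕ => ((jf (n+1) : ℝ) / 2^(n+1))) atTop (nhds t) := by
    have := hfl.comp (tendsto_add_atTop_nat 1)
    simpa [Function.comp_def] using this
  have hL : Tendsto (fun n => (Dmat d)⁻¹ ^ (n+1) * refineB d A ℓ (n+1) (jf (n+1)))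
      atTop (nhds (F ℓ t)) :=
    tendstoG d A F hFcont hconv ℓ t (fun n => jf (n+1)) (fun n => n+1)
      (tendsto_add_atTop_nat 1) hfl1
  have hK : ∀ k : ℤ, Tendsto
      (fun n => (Dmat d)⁻¹ ^ n * refineB d A (ℓ+1) n (jf (n+1) - 2^n * k))
      atTop (nhds (F (ℓ+1) (2 * t - (k : ℝ)))) := by
    intro k
    apply tendstoG d A F hFcont hconv (ℓ+1) (2 * t - (k : ℝ))
      (fun n => jf (n+1) - 2^n * k) (fun n => n) tendsto_id
    have h2 : Tendsto (fun n : ℕ => 2 * ((jf (n+1) : ℝ) / 2^(n+1)) - (k : ℝ))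
        atTop (nhds (2 * t - (k : ℝ))) := (hfl1.const_mul 2).sub_const (k : ℝ)
    apply h2.congr
    intro n
    have h2n : (0:ℝ) < 2^n := by positivity
    push_cast
    field_simp
    ring
  have heq : ∀ n : ℕ, (Dmat d)⁻¹ ^ (n+1) * refineB d A ℓ (n+1) (jf (n+1))
      = ∑ k ∈ s, (Dmat d)⁻¹ * ((Dmat d)⁻¹ ^ n * refineB d A (ℓ+1) n (jf (n+1) - 2^n * k))
          * A ℓ k := by
    intro n
    rw [refineB_key d A hA ℓ n (jf (n+1)),
      finsum_eq_sum_of_support_subset _ (s := s) (by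
        intro k hk
        simp only [Function.mem_support, ne_eq] at hk
        simp only [hs, Set.Finite.coe_toFinset, Function.mem_support, ne_eq]
        intro h0
        exact hk (by simp [h0])), Finset.mul_sum]
    refine Finset.sum_congr rfl fun k _ => ?_
    rw [pow_succ']
    simp only [mul_assoc]
  have hR : Tendsto (fun n => ∑ k ∈ s,
      (Dmat d)⁻¹ * ((Dmat d)⁻¹ ^ n * refineB d A (ℓ+1) n (jf (n+1) - 2^n * k)) * A ℓ k)
      atTop (nhds (∑ k ∈ s, (Dmat d)⁻¹ * F (ℓ + 1) (2 * t - (k : ℝ)) * A ℓ k)) := by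
    apply tendsto_finset_sum
    intro k _
    have contk : Continuous
        (fun X : Matrix (Fin (d+1)) (Fin (d+1)) ℝ => (Dmat d)⁻¹ * X * A ℓ k) :=
      (continuous_const.matrix_mul continuous_id).matrix_mul continuous_const
    exact (contk.tendsto (F (ℓ+1) (2 * t - (k : ℝ)))).comp (hK k)
  exact tendsto_nhds_unique (Filter.Tendsto.congr heq hL) hR
end
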